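/- arXiv:2506.17803 — 9 statements merged into one kernel-verified Lean document; each statement's English description precedes it below -/
import Mathlib

section
/- For every channel with state (N, P_S) on finite alphabets X, Y, S and every M ∈ ℕ, the supremum of η(Z) over all NS-assisted coding schemes Z with message set {1,...,M} for (N, P_S) equals the supremum of η(Z̄) over all NS-assisted coding schemes Z̄ with message set {1,...,M} for the CSIR-augmented channel (N̄, P_S). -/
open scoped BigOperators Classical
open Finset Filter

noncomputable section

/-- A probability mass function on a finite alphabet. -/
def IsPMF {A : Type*} [Fintype A] (p : A → ℝ) : Prop :=
  (∀ a, 0 ≤ p a) ∧ ∑ a, p a = 1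

/-- A channel-with-state kernel `N(y|x,s)`. -/
def IsStateKernel {X S Y : Type*} [Fintype Y] (N : X → S → Y → ℝ) : Prop :=
  (∀ x s y, 0 ≤ N x s y) ∧ ∀ x s, ∑ y, N x s y = 1

/-- Bipartite non-signaling box: party 1 has input `a1`, output `b1`;
party 2 has input `a2`, output `b2`. -/
def IsNSBox {A1 A2 B1 B2 : Type*} [Fintype B1] [Fintype B2]
    (Z : A1 → A2 → B1 → B2 → ℝ) : Prop :=
  (∀ a1 a2 b1 b2, 0 ≤ Z a1 a2 b1 b2) ∧
  (∀ a1 a2, ∑ b1, ∑ b2, Z a1 a2 b1 b2 = 1) ∧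
  (∀ a1 a2 a2' b1, ∑ b2, Z a1 a2 b1 b2 = ∑ b2, Z a1 a2' b1 b2) ∧
  (∀ a1 a1' a2 b2, ∑ b1, Z a1 a2 b1 b2 = ∑ b1, Z a1' a2 b1 b2)

/-- Success probability of an NS-assisted coding scheme `Z(x, ŵ | (w,s), y)`
over the channel with state `(N, PS)`, with message set `Fin M`. -/
def etaCWS {X S Y : Type*} [Fintype X] [Fintype S] [Fintype Y] (M : ℕ)
    (N : X → S → Y → ℝ) (PS : S → ℝ)
    (Z : (Fin M × S) → Y → X → Fin M → ℝ) : ℝ :=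
  (M : ℝ)⁻¹ * ∑ w, ∑ s, ∑ x, ∑ y, PS s * N x s y * Z (w, s) y x w

/-- The CSIR-augmented channel `N̄((y,s_R)|x,s) = N(y|x,s)·𝟙(s_R = s)`. -/
def Nbar {X S Y : Type*} (N : X → S → Y → ℝ) : X → S → (Y × S) → ℝ :=
  fun x s p => if p.2 = s then N x s p.1 else 0

set_option linter.unusedSectionVars false

section Aux
variable {X S Y : Type*} [Fintype X] [Fintype S] [Fintype Y]

lemma sum_reorder4 {M : ℕ} (F : Fin M → S → X → Y → ℝ) :
    ∑ w, ∑ s, ∑ x, ∑ y, F w s x y = ∑ s, ∑ x, ∑ y, ∑ w, F w s x y := by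
  rw [Finset.sum_comm]
  refine Finset.sum_congr rfl fun s _ => ?_
  rw [Finset.sum_comm]
  refine Finset.sum_congr rfl fun x _ => ?_
  exact Finset.sum_comm

lemma nbar_collapse {M : ℕ} (N : X → S → Y → ℝ) (PS : S → ℝ)
    (Z : (Fin M × S) → (Y × S) → X → Fin M → ℝ) (a1 : Fin M × S) (s : S) (x : X) (u : Fin M) :
    ∑ p : Y × S, PS s * Nbar N x s p * Z a1 p x u
      = ∑ y, PS s * N x s y * Z a1 (y, s) x u := by
  rw [Fintype.sum_prod_type]
  refine Finset.sum_congr rfl fun y _ => ?_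
  simp [Nbar, ite_mul, mul_ite, mul_zero, zero_mul, Finset.sum_ite_eq']

lemma sum_shift {m : ℕ} (g : Fin (m+1) → Fin (m+1) → ℝ) :
    ∑ b, ∑ c, g c (b + c) = ∑ c, ∑ b, g c b := by
  rw [Finset.sum_comm]
  exact Finset.sum_congr rfl fun c _ => Equiv.sum_comp (Equiv.addRight c) (g c)

lemma sum_shift' {m : ℕ} (b : Fin (m+1)) (g : Fin (m+1) → ℝ) :
    ∑ c, g (b + c) = ∑ u, g u :=
  Equiv.sum_comp (Equiv.addLeft b) g

/-- Embedding of a CSIT-only scheme into a CSIR-augmented scheme: ignore `s_R`. -/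
def csirBox {M : ℕ} (Z : (Fin M × S) → Y → X → Fin M → ℝ) :
    (Fin M × S) → (Y × S) → X → Fin M → ℝ :=
  fun a1 p x b => Z a1 p.1 x b

lemma csirBox_isNSBox {M : ℕ} (Z : (Fin M × S) → Y → X → Fin M → ℝ) (hZ : IsNSBox Z) :
    IsNSBox (csirBox Z) := by
  obtain ⟨h0, h1, h2, h3⟩ := hZ
  exact ⟨fun a1 a2 b1 b2 => h0 a1 a2.1 b1 b2, fun a1 a2 => h1 a1 a2.1,
    fun a1 a2 a2' b1 => h2 a1 a2.1 a2'.1 b1, fun a1 a1' a2 b2 => h3 a1 a1' a2.1 b2⟩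

lemma csirBox_eta {M : ℕ} (N : X → S → Y → ℝ) (PS : S → ℝ)
    (Z : (Fin M × S) → Y → X → Fin M → ℝ) :
    etaCWS M (Nbar N) PS (csirBox Z) = etaCWS M N PS Z := by
  unfold etaCWS
  congr 1
  refine Finset.sum_congr rfl fun w _ => Finset.sum_congr rfl fun s _ =>
    Finset.sum_congr rfl fun x _ => ?_
  exact nbar_collapse N PS (csirBox Z) (w, s) s x w

/-- The message-symmetrized diagonal restriction of a CSIR scheme. -/
def diagBox {m : ℕ} (Z : (Fin (m+1) × S) → (Y × S) → X → Fin (m+1) → ℝ) :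
    (Fin (m+1) × S) → Y → X → Fin (m+1) → ℝ :=
  fun a1 y x b => ((m+1 : ℕ) : ℝ)⁻¹ * ∑ c, Z (a1.1 + c, a1.2) (y, a1.2) x (b + c)

lemma diagBox_isNSBox {m : ℕ} (Z : (Fin (m+1) × S) → (Y × S) → X → Fin (m+1) → ℝ)
    (hZ : IsNSBox Z) : IsNSBox (diagBox Z) := by
  obtain ⟨h0, h1, h2, h3⟩ := hZ
  have hM : ((m+1 : ℕ) : ℝ) ≠ 0 := by positivity
  have hsum1 : ∀ x : ℝ, x = ((m+1:ℕ):ℝ) → ((m+1:ℕ):ℝ)⁻¹ * x = 1 := by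
    rintro _ rfl; exact inv_mul_cancel₀ hM
  refine ⟨?_, ?_, ?_, ?_⟩
  · intro a1 y x b
    exact mul_nonneg (by positivity) (Finset.sum_nonneg fun c _ => h0 _ _ _ _)
  · intro a1 y
    simp only [diagBox, ← Finset.mul_sum]
    apply hsum1
    rw [Finset.sum_congr rfl fun x _ =>
      sum_shift (fun c b => Z (a1.1 + c, a1.2) (y, a1.2) x b), Finset.sum_comm]
    rw [Finset.sum_congr rfl fun c _ => h1 (a1.1 + c, a1.2) (y, a1.2)]
    simp
  · intro a1 y y' x
    simp only [diagBox, ← Finset.mul_sum]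
    rw [sum_shift (fun c b => Z (a1.1 + c, a1.2) (y, a1.2) x b),
        sum_shift (fun c b => Z (a1.1 + c, a1.2) (y', a1.2) x b)]
    congr 1
    exact Finset.sum_congr rfl fun c _ => h2 (a1.1 + c, a1.2) (y, a1.2) (y', a1.2) x
  · have hconst : ∀ (a1 : Fin (m+1) × S) (y : Y) (b : Fin (m+1)),
        ∑ x, diagBox Z a1 y x b = ((m+1:ℕ):ℝ)⁻¹ := by
      intro a1 y b
      simp only [diagBox, ← Finset.mul_sum]
      rw [Finset.sum_comm]
      rw [Finset.sum_congr rfl fun c _ => h3 (a1.1 + c, a1.2) a1 (y, a1.2) (b + c)]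
      rw [Finset.sum_comm]
      rw [Finset.sum_congr rfl fun x _ =>
        sum_shift' b (fun u => Z a1 (y, a1.2) x u)]
      rw [h1 a1 (y, a1.2), mul_one]
    intro a1 a1' y b
    rw [hconst a1 y b, hconst a1' y b]

lemma diagBox_eta {m : ℕ} (N : X → S → Y → ℝ) (PS : S → ℝ)
    (Z : (Fin (m+1) × S) → (Y × S) → X → Fin (m+1) → ℝ) :
    etaCWS (m+1) N PS (diagBox Z) = etaCWS (m+1) (Nbar N) PS Z := by
  have hM : ((m+1 : ℕ) : ℝ) ≠ 0 := by positivity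
  have key : ∀ (s : S) (x : X) (y : Y),
      ∑ w, diagBox Z (w, s) y x w = ∑ u, Z (u, s) (y, s) x u := by
    intro s x y
    simp only [diagBox, ← Finset.mul_sum]
    rw [Finset.sum_congr rfl fun w _ =>
      sum_shift' w (fun u => Z (u, s) (y, s) x u)]
    rw [Finset.sum_const, Finset.card_univ, Fintype.card_fin, nsmul_eq_mul,
      ← mul_assoc, inv_mul_cancel₀ hM, one_mul]
  unfold etaCWS
  congr 1
  rw [sum_reorder4, sum_reorder4]
  refine Finset.sum_congr rfl fun s _ => Finset.sum_congr rfl fun x _ => ?_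
  calc ∑ y, ∑ w, PS s * N x s y * diagBox Z (w, s) y x w
      = ∑ y, PS s * N x s y * ∑ w, diagBox Z (w, s) y x w := by
        exact Finset.sum_congr rfl fun y _ => (Finset.mul_sum _ _ _).symm
    _ = ∑ y, ∑ u, PS s * N x s y * Z (u, s) (y, s) x u := by
        refine Finset.sum_congr rfl fun y _ => ?_
        rw [key s x y, Finset.mul_sum]
    _ = ∑ u, ∑ y, PS s * N x s y * Z (u, s) (y, s) x u := Finset.sum_comm
    _ = ∑ u, ∑ p : Y × S, PS s * Nbar N x s p * Z (u, s) p x u :=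
        Finset.sum_congr rfl fun u _ => (nbar_collapse N PS Z (u, s) s x u).symm
    _ = ∑ p : Y × S, ∑ w, PS s * Nbar N x s p * Z (w, s) p x w := Finset.sum_comm

end Aux

set_option linter.unusedSectionVars true

/-- Virtual signaling of CSIT, finite blocklength: the supremum of the
success probability over NS-assisted coding schemes for `(N, PS)` equals the supremum over
NS-assisted coding schemes for the CSIR-augmented channel `(N̄, PS)`. -/
theorem stmt0 {X S Y : Type*} [Fintype X] [Fintype S] [Fintype Y]
    (N : X → S → Y → ℝ) (hN : IsStateKernel N) (PS : S → ℝ) (hPS : IsPMF PS) (M : ℕ) :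
    sSup {e : ℝ | ∃ Z : (Fin M × S) → Y → X → Fin M → ℝ,
        IsNSBox Z ∧ e = etaCWS M N PS Z} =
    sSup {e : ℝ | ∃ Z : (Fin M × S) → (Y × S) → X → Fin M → ℝ,
        IsNSBox Z ∧ e = etaCWS M (Nbar N) PS Z} := by
  obtain _ | m := M
  · have h₁ : {e : ℝ | ∃ Z : (Fin 0 × S) → Y → X → Fin 0 → ℝ,
        IsNSBox Z ∧ e = etaCWS 0 N PS Z} = {0} := by
      ext e
      simp only [Set.mem_setOf_eq, Set.mem_singleton_iff]
      constructor
      · rintro ⟨Z, -, rfl⟩; simp [etaCWS]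
      · rintro rfl
        exact ⟨fun _ _ _ _ => 0,
          ⟨fun _ _ _ _ => le_rfl, fun a1 _ => a1.1.elim0, fun _ _ _ _ => rfl,
           fun _ _ _ b2 => b2.elim0⟩, by simp [etaCWS]⟩
    have h₂ : {e : ℝ | ∃ Z : (Fin 0 × S) → (Y × S) → X → Fin 0 → ℝ,
        IsNSBox Z ∧ e = etaCWS 0 (Nbar N) PS Z} = {0} := by
      ext e
      simp only [Set.mem_setOf_eq, Set.mem_singleton_iff]
      constructor
      · rintro ⟨Z, -, rfl⟩; simp [etaCWS]
      · rintro rfl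
        exact ⟨fun _ _ _ _ => 0,
          ⟨fun _ _ _ _ => le_rfl, fun a1 _ => a1.1.elim0, fun _ _ _ _ => rfl,
           fun _ _ _ b2 => b2.elim0⟩, by simp [etaCWS]⟩
    rw [h₁, h₂]
  · have hset : {e : ℝ | ∃ Z : (Fin (m+1) × S) → Y → X → Fin (m+1) → ℝ,
        IsNSBox Z ∧ e = etaCWS (m+1) N PS Z} =
      {e : ℝ | ∃ Z : (Fin (m+1) × S) → (Y × S) → X → Fin (m+1) → ℝ,
        IsNSBox Z ∧ e = etaCWS (m+1) (Nbar N) PS Z} := by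
      ext e
      simp only [Set.mem_setOf_eq]
      constructor
      · rintro ⟨Z, hZ, rfl⟩
        exact ⟨csirBox Z, csirBox_isNSBox Z hZ, (csirBox_eta N PS Z).symm⟩
      · rintro ⟨Z, hZ, rfl⟩
        exact ⟨diagBox Z, diagBox_isNSBox Z hZ, (diagBox_eta N PS Z).symm⟩
    rw [hset]
end
end

section
/- Consider a K-user broadcast channel N(y1,...,yK|x) with message sets {1,...,M_k} and side-information sets W_k ⊆ [K]\{k} for k ∈ [K], and fully ((K+1)-partite) NS-assisted coding schemes. If k ∈ [K] is such that k ∉ W_1 ∪ W_2 ∪ ... ∪ W_K, then the optimal joint success probability is unchanged when user k's side information is removed: η*_NS(SI = [K]) = η*_NS(SI = [K]\{k}). -/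
open scoped BigOperators Classical
open Finset Filter

noncomputable section

/-- A `K`-user broadcast channel kernel `N(y_1,…,y_K|x)`. -/
def IsKUserKernel {K : ℕ} {X : Type} {Y : Fin K → Type} [∀ k, Fintype (Y k)]
    (N : X → (∀ k, Y k) → ℝ) : Prop :=
  (∀ x y, 0 ≤ N x y) ∧ ∀ x, ∑ y : ∀ k, Y k, N x y = 1

/-- A multipartite non-signaling box over an index set `I` of parties, with input
alphabets `A i` and output alphabets `B i`: for every subset `T` of the parties, the
marginal obtained by summing over the outputs of the parties not in `T` is unchanged
when the inputs of the parties not in `T` are altered. -/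
def IsNSBoxFam {I : Type} [Fintype I] [DecidableEq I] {A B : I → Type}
    [∀ i, Fintype (A i)] [∀ i, Fintype (B i)]
    (Z : (∀ i, A i) → (∀ i, B i) → ℝ) : Prop :=
  (∀ a b, 0 ≤ Z a b) ∧
  (∀ a, ∑ b, Z a b = 1) ∧
  ∀ (T : Finset I) (a a' : ∀ i, A i), (∀ i ∈ T, a i = a' i) →
    ∀ bT : ∀ i, B i,
      ∑ b ∈ Finset.univ.filter (fun b : ∀ i, B i => ∀ i ∈ T, b i = bT i), Z a b =
      ∑ b ∈ Finset.univ.filter (fun b : ∀ i, B i => ∀ i ∈ T, b i = bT i), Z a' b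

variable {K : ℕ}

/-- The side-information alphabet of user `k` when the active side-information set is
`𝒦`: it is `S_k = Π_{j ∈ W k} {1,…,M_j}` if `k ∈ 𝒦` and (essentially) trivial
otherwise. -/
def SideInfo (M : Fin K → ℕ) (W : Fin K → Finset (Fin K)) (𝒦 : Finset (Fin K))
    (k : Fin K) : Type :=
  ∀ j : {j : Fin K // j ∈ W k ∧ k ∈ 𝒦}, Fin (M j.1)

instance (M : Fin K → ℕ) (W : Fin K → Finset (Fin K)) (𝒦 : Finset (Fin K)) (k : Fin K) :
    Fintype (SideInfo M W 𝒦 k) := by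
  unfold SideInfo; infer_instance

/-- Input alphabets of the `K+1` parties (`none` = transmitter, `some k` = user `k`). -/
def InA (X : Type) (Y : Fin K → Type) (M : Fin K → ℕ) (W : Fin K → Finset (Fin K))
    (𝒦 : Finset (Fin K)) : Option (Fin K) → Type
  | none => ∀ k, Fin (M k)
  | some k => Y k × SideInfo M W 𝒦 k

instance (X : Type) (Y : Fin K → Type) [∀ k, Fintype (Y k)] (M : Fin K → ℕ)
    (W : Fin K → Finset (Fin K)) (𝒦 : Finset (Fin K)) (i : Option (Fin K)) :
    Fintype (InA X Y M W 𝒦 i) := by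
  cases i with
  | none => exact (inferInstance : Fintype (∀ k, Fin (M k)))
  | some k => exact (inferInstance : Fintype (Y k × SideInfo M W 𝒦 k))

/-- Output alphabets of the `K+1` parties. -/
def OutA (X : Type) (M : Fin K → ℕ) : Option (Fin K) → Type
  | none => X
  | some k => Fin (M k)

instance (X : Type) [Fintype X] (M : Fin K → ℕ) (i : Option (Fin K)) :
    Fintype (OutA X M i) := by
  cases i with
  | none => exact (inferInstance : Fintype X)
  | some k => exact (inferInstance : Fintype (Fin (M k)))

/-- The tuple of inputs fed to the box when the messages are `w` and the channel
outputs are `y`: the transmitter inputs `w`, and user `k` inputs `y k` together with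
its available side information `(w_j)_{j ∈ W k}`. -/
def mkIn {X : Type} {Y : Fin K → Type} {M : Fin K → ℕ} {W : Fin K → Finset (Fin K)}
    {𝒦 : Finset (Fin K)} (w : ∀ k, Fin (M k)) (y : ∀ k, Y k) :
    ∀ i, InA X Y M W 𝒦 i
  | none => w
  | some k => (y k, fun j => w j.1)

/-- The tuple of outputs corresponding to the channel input `x` and correct decoding
of all messages `w`. -/
def mkOut {X : Type} {M : Fin K → ℕ} (x : X) (w : ∀ k, Fin (M k)) :
    ∀ i, OutA X M i
  | none => x
  | some k => w k

/-- Joint success probability of a fully NS-assisted coding scheme with side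
information at the users in `𝒦`. -/
def etaK {X : Type} [Fintype X] {Y : Fin K → Type} [∀ k, Fintype (Y k)]
    (M : Fin K → ℕ) (W : Fin K → Finset (Fin K)) (𝒦 : Finset (Fin K))
    (N : X → (∀ k, Y k) → ℝ)
    (Z : (∀ i, InA X Y M W 𝒦 i) → (∀ i, OutA X M i) → ℝ) : ℝ :=
  (∏ k, (M k : ℝ))⁻¹ * ∑ w : ∀ k, Fin (M k), ∑ x : X, ∑ y : ∀ k, Y k,
    N x y * Z (mkIn w y) (mkOut x w)

/-- `η*_NS(SI = 𝒦)`: the optimal joint success probability over fully NS-assisted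
coding schemes with side information available to the users in `𝒦`. -/
def etaStarK (X : Type) [Fintype X] (Y : Fin K → Type) [∀ k, Fintype (Y k)]
    (M : Fin K → ℕ) (W : Fin K → Finset (Fin K)) (N : X → (∀ k, Y k) → ℝ)
    (𝒦 : Finset (Fin K)) : ℝ :=
  sSup {e : ℝ | ∃ Z : (∀ i, InA X Y M W 𝒦 i) → (∀ i, OutA X M i) → ℝ,
    IsNSBoxFam Z ∧ e = etaK M W 𝒦 N Z}


namespace Stmt7Aux

variable {K : ℕ} {X : Type} [Fintype X] {Y : Fin K → Type} [∀ k, Fintype (Y k)]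
  {M : Fin K → ℕ} {W : Fin K → Finset (Fin K)} {k : Fin K}

/-- Shift equiv on messages: add `r` to coordinate `k`. -/
def msgShift [NeZero (M k)] (r : Fin (M k)) : (∀ j, Fin (M j)) ≃ (∀ j, Fin (M j)) :=
  Equiv.piCongrRight fun j =>
    if h : j = k then (by subst h; exact Equiv.addRight r) else Equiv.refl _

lemma msgShift_apply_ne [NeZero (M k)] (r : Fin (M k)) {j : Fin K} (h : j ≠ k)
    (w : ∀ j, Fin (M j)) : msgShift r w j = w j := by
  simp [msgShift, Equiv.piCongrRight, h]

lemma msgShift_apply_eq [NeZero (M k)] (r : Fin (M k)) (w : ∀ j, Fin (M j)) :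
    msgShift r w k = w k + r := by
  simp [msgShift, Equiv.piCongrRight]

/-- coordinate equivs for the output shift -/
def outShiftCoord [NeZero (M k)] (r : Fin (M k)) :
    ∀ i : Option (Fin K), OutA X M i ≃ OutA X M i
  | none => Equiv.refl _
  | some j =>
      if h : j = k then (by subst h; exact (Equiv.addRight r : Fin (M j) ≃ Fin (M j)))
      else Equiv.refl _

/-- Shift equiv on outputs: add `r` to user `k`'s output. -/
def outShift [NeZero (M k)] (r : Fin (M k)) :
    (∀ i, OutA X M i) ≃ (∀ i, OutA X M i) :=
  Equiv.piCongrRight (outShiftCoord (X := X) r)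

lemma outShift_apply_none [NeZero (M k)] (r : Fin (M k)) (b : ∀ i, OutA X M i) :
    outShift (X := X) r b none = b none := rfl

lemma outShift_apply_ne [NeZero (M k)] (r : Fin (M k)) {j : Fin K} (h : j ≠ k)
    (b : ∀ i, OutA X M i) : outShift (X := X) r b (some j) = b (some j) := by
  simp [outShift, Equiv.piCongrRight, outShiftCoord, h]

lemma outShift_apply_eq [NeZero (M k)] (r : Fin (M k)) (b : ∀ i, OutA X M i) :
    outShift (X := X) r b (some k) =
      @HAdd.hAdd (Fin (M k)) (Fin (M k)) (Fin (M k)) _ (b (some k)) r := by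
  simp [outShift, Equiv.piCongrRight, outShiftCoord]
  rfl

/-- Forget user `k`'s side information: map full-SI inputs from restricted-SI inputs. -/
def Gmap (a : ∀ i, InA X Y M W Finset.univ i) : ∀ i, InA X Y M W (Finset.univ \ {k}) i
  | none => a none
  | some j =>
      ⟨(a (some j)).1, fun i' => (a (some j)).2 ⟨i'.1, ⟨i'.2.1, Finset.mem_univ _⟩⟩⟩

lemma Gmap_agree {a a' : ∀ i, InA X Y M W Finset.univ i} {T : Finset (Option (Fin K))}
    (h : ∀ i ∈ T, a i = a' i) : ∀ i ∈ T, Gmap (k := k) a i = Gmap (k := k) a' i := by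
  intro i hi
  cases i with
  | none => exact h none hi
  | some j => simp [Gmap, h (some j) hi]; rfl

lemma Gmap_mkIn (w : ∀ j, Fin (M j)) (y : ∀ j, Y j) :
    Gmap (W := W) (k := k) (mkIn (X := X) (W := W) w y) = mkIn (X := X) (W := W) w y := by
  funext i
  cases i with
  | none => rfl
  | some j => rfl

/-- Extend a restricted-SI box to a full-SI box by forgetting user `k`'s side info. -/
def toFull (Z' : (∀ i, InA X Y M W (Finset.univ \ {k}) i) → (∀ i, OutA X M i) → ℝ) :
    (∀ i, InA X Y M W Finset.univ i) → (∀ i, OutA X M i) → ℝ :=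
  fun a b => Z' (Gmap a) b

lemma isNS_toFull {Z' : (∀ i, InA X Y M W (Finset.univ \ {k}) i) → (∀ i, OutA X M i) → ℝ}
    (hZ' : IsNSBoxFam Z') : IsNSBoxFam (toFull Z') := by
  obtain ⟨h0, h1, h2⟩ := hZ'
  exact ⟨fun a b => h0 _ _, fun a => h1 _,
    fun T a a' h bT => h2 T _ _ (Gmap_agree h) bT⟩

lemma etaK_toFull {Z' : (∀ i, InA X Y M W (Finset.univ \ {k}) i) → (∀ i, OutA X M i) → ℝ}
    (N : X → (∀ j, Y j) → ℝ) :
    etaK M W Finset.univ N (toFull Z') = etaK M W (Finset.univ \ {k}) N Z' := by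
  unfold etaK
  congr 1

/-- Wire a restricted-SI input tuple into a full-SI input tuple: the transmitter's
`k`-th message coordinate is shifted by `r`, and user `k`'s side information is set to
the transmitter's messages. -/
def Fmap [NeZero (M k)] (r : Fin (M k))
    (a : ∀ i, InA X Y M W (Finset.univ \ {k}) i) : ∀ i, InA X Y M W Finset.univ i
  | none => Function.update (a none) k ((a none : ∀ j, Fin (M j)) k + r)
  | some j =>
      ⟨(a (some j)).1, fun i' =>
        if h : j = k then (a none : ∀ j, Fin (M j)) i'.1
        else (a (some j)).2 ⟨i'.1, ⟨i'.2.1, by simp [Finset.mem_sdiff, h]⟩⟩⟩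

/-- Same as `Fmap` but without the transmitter shift. -/
def Fsome (a : ∀ i, InA X Y M W (Finset.univ \ {k}) i) : ∀ i, InA X Y M W Finset.univ i
  | none => a none
  | some j =>
      ⟨(a (some j)).1, fun i' =>
        if h : j = k then (a none : ∀ j, Fin (M j)) i'.1
        else (a (some j)).2 ⟨i'.1, ⟨i'.2.1, by simp [Finset.mem_sdiff, h]⟩⟩⟩

lemma Fmap_Fsome_agree [NeZero (M k)] (r : Fin (M k))
    (a : ∀ i, InA X Y M W (Finset.univ \ {k}) i) {T : Finset (Option (Fin K))}
    (hT : none ∉ T) : ∀ i ∈ T, Fmap r a i = Fsome a i := by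
  intro i hi
  cases i with
  | none => exact absurd hi hT
  | some j => rfl

lemma Fmap_agree_of_mem [NeZero (M k)] (r : Fin (M k))
    {a a' : ∀ i, InA X Y M W (Finset.univ \ {k}) i} {T : Finset (Option (Fin K))}
    (hn : none ∈ T) (h : ∀ i ∈ T, a i = a' i) :
    ∀ i ∈ T, Fmap r a i = Fmap r a' i := by
  have h0 : a none = a' none := h none hn
  intro i hi
  cases i with
  | none => simp [Fmap, h0]; rfl
  | some j => simp [Fmap, h0, h (some j) hi]; rfl

lemma Fmap_agree_of_not_mem [NeZero (M k)] (r : Fin (M k))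
    {a a' : ∀ i, InA X Y M W (Finset.univ \ {k}) i} {T : Finset (Option (Fin K))}
    (hn : none ∉ T) (hkT : (some k : Option (Fin K)) ∉ T) (h : ∀ i ∈ T, a i = a' i) :
    ∀ i ∈ T, Fmap r a i = Fmap r a' i := by
  intro i hi
  cases i with
  | none => exact absurd hi hn
  | some j =>
      have hjk : j ≠ k := by rintro rfl; exact hkT hi
      simp [Fmap, hjk, h (some j) hi]
      rfl

lemma Fsome_agree_erase [NeZero (M k)]
    {a a' : ∀ i, InA X Y M W (Finset.univ \ {k}) i} {T : Finset (Option (Fin K))}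
    (hn : none ∉ T) (h : ∀ i ∈ T, a i = a' i) :
    ∀ i ∈ T.erase (some k), Fsome (M := M) a i = Fsome a' i := by
  intro i hi
  obtain ⟨hik, hiT⟩ := Finset.mem_erase.mp hi
  cases i with
  | none => exact absurd hiT hn
  | some j =>
      have hjk : j ≠ k := by rintro rfl; exact hik rfl
      simp [Fsome, hjk, h (some j) hiT]
      rfl

/-- The restricted-SI box obtained from a full-SI box: feed user `k`'s side
information internally from the transmitter's input, twirled by a uniformly random
shift of the `k`-th message. -/
def toRestr [NeZero (M k)] (Z : (∀ i, InA X Y M W Finset.univ i) → (∀ i, OutA X M i) → ℝ) :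
    (∀ i, InA X Y M W (Finset.univ \ {k}) i) → (∀ i, OutA X M i) → ℝ :=
  fun a b => (M k : ℝ)⁻¹ * ∑ r : Fin (M k), Z (Fmap r a) (outShift r b)

lemma outShift_apply [NeZero (M k)] (r : Fin (M k)) (b : ∀ i, OutA X M i)
    (i : Option (Fin K)) :
    outShift (X := X) r b i = outShiftCoord (X := X) r i (b i) := rfl

lemma margShift [NeZero (M k)]
    (Z : (∀ i, InA X Y M W Finset.univ i) → (∀ i, OutA X M i) → ℝ)
    (A : ∀ i, InA X Y M W Finset.univ i) (r : Fin (M k))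
    (T : Finset (Option (Fin K))) (bT : ∀ i, OutA X M i) :
    ∑ b ∈ Finset.univ.filter (fun b : ∀ i, OutA X M i => ∀ i ∈ T, b i = bT i),
        Z A (outShift r b) =
    ∑ b ∈ Finset.univ.filter
        (fun b : ∀ i, OutA X M i => ∀ i ∈ T, b i = outShift (X := X) r bT i), Z A b := by
  rw [Finset.sum_filter, Finset.sum_filter,
    ← Equiv.sum_comp (outShift (X := X) r)
      (fun b => if ∀ i ∈ T, b i = outShift (X := X) r bT i then Z A b else 0)]
  refine Finset.sum_congr rfl fun b _ => ?_
  refine if_congr ?_ rfl rfl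
  refine forall₂_congr fun i _ => ?_
  rw [outShift_apply, outShift_apply]
  exact (Equiv.apply_eq_iff_eq _).symm

lemma sum_marg_shift [NeZero (M k)]
    (Z : (∀ i, InA X Y M W Finset.univ i) → (∀ i, OutA X M i) → ℝ)
    (A : ∀ i, InA X Y M W Finset.univ i)
    {T : Finset (Option (Fin K))} (hkT : (some k : Option (Fin K)) ∈ T)
    (bT : ∀ i, OutA X M i) :
    ∑ r : Fin (M k), ∑ b ∈ Finset.univ.filter
        (fun b : ∀ i, OutA X M i => ∀ i ∈ T, b i = outShift (X := X) r bT i), Z A b =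
    ∑ b ∈ Finset.univ.filter
        (fun b : ∀ i, OutA X M i => ∀ i ∈ T.erase (some k), b i = bT i), Z A b := by
  simp only [Finset.sum_filter]
  rw [Finset.sum_comm]
  refine Finset.sum_congr rfl fun b _ => ?_
  have hcond : ∀ r : Fin (M k),
      (∀ i ∈ T, b i = outShift (X := X) r bT i) ↔
        ((r = @HSub.hSub (Fin (M k)) (Fin (M k)) (Fin (M k)) _ (b (some k)) (bT (some k)))
          ∧ ∀ i ∈ T.erase (some k), b i = bT i) := by
    intro r
    constructor
    · intro h
      constructor
      · have hK := h (some k) hkT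
        rw [outShift_apply_eq] at hK
        exact eq_sub_iff_add_eq.mpr ((add_comm _ _).trans hK.symm)
      · intro i hi
        obtain ⟨hik, hiT⟩ := Finset.mem_erase.mp hi
        have hI := h i hiT
        cases i with
        | none => rwa [outShift_apply_none] at hI
        | some j =>
            have hjk : j ≠ k := by rintro rfl; exact hik rfl
            rwa [outShift_apply_ne _ hjk] at hI
    · rintro ⟨hr, h⟩ i hi
      by_cases hik : i = some k
      · subst hik
        rw [outShift_apply_eq, hr]
        have e : ∀ p q : Fin (M k), q = p + (q - p) := fun p q => (add_sub_cancel p q).symm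
        exact e _ _
      · cases i with
        | none => exact h none (Finset.mem_erase.mpr ⟨hik, hi⟩)
        | some j =>
            have hjk : j ≠ k := by rintro rfl; exact hik rfl
            rw [outShift_apply_ne _ hjk]
            exact h (some j) (Finset.mem_erase.mpr ⟨hik, hi⟩)
  simp only [hcond, ite_and]
  rw [Finset.sum_ite_eq' Finset.univ
    (@HSub.hSub (Fin (M k)) (Fin (M k)) (Fin (M k)) _ (b (some k)) (bT (some k)))
    (fun _ => if (∀ i ∈ T.erase (some k), b i = bT i) then Z A b else 0)]
  simp

lemma isNS_toRestr [NeZero (M k)]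
    {Z : (∀ i, InA X Y M W Finset.univ i) → (∀ i, OutA X M i) → ℝ}
    (hZ : IsNSBoxFam Z) : IsNSBoxFam (toRestr (k := k) Z) := by
  obtain ⟨h0, h1, h2⟩ := hZ
  have hMk : (0:ℝ) < (M k : ℝ) := by
    exact_mod_cast Nat.pos_of_ne_zero (NeZero.ne _)
  refine ⟨?_, ?_, ?_⟩
  · intro a b
    exact mul_nonneg (by positivity) (Finset.sum_nonneg fun r _ => h0 _ _)
  · intro a
    simp only [toRestr]
    rw [← Finset.mul_sum, Finset.sum_comm]
    have hone : ∀ r : Fin (M k), ∑ b, Z (Fmap r a) (outShift r b) = 1 := fun r => by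
      rw [Equiv.sum_comp (outShift (X := X) r) (Z (Fmap r a))]
      exact h1 _
    rw [Finset.sum_congr rfl fun r _ => hone r]
    simp only [Finset.sum_const, Finset.card_univ, Fintype.card_fin, nsmul_eq_mul,
      mul_one]
    exact inv_mul_cancel₀ hMk.ne'
  · intro T a a' hagree bT
    have reduce : ∀ aa : ∀ i, InA X Y M W (Finset.univ \ {k}) i,
        ∑ b ∈ Finset.univ.filter (fun b : ∀ i, OutA X M i => ∀ i ∈ T, b i = bT i),
          toRestr Z aa b
        = (M k : ℝ)⁻¹ * ∑ r : Fin (M k), ∑ b ∈ Finset.univ.filter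
            (fun b : ∀ i, OutA X M i => ∀ i ∈ T, b i = outShift (X := X) r bT i),
            Z (Fmap r aa) b := by
      intro aa
      simp only [toRestr]
      rw [← Finset.mul_sum, Finset.sum_comm]
      exact congrArg _ (Finset.sum_congr rfl fun r _ => margShift Z (Fmap r aa) r T bT)
    rw [reduce a, reduce a']
    congr 1
    by_cases hn : none ∈ T
    · exact Finset.sum_congr rfl fun r _ =>
        h2 T _ _ (Fmap_agree_of_mem r hn hagree) _
    · by_cases hkT : (some k : Option (Fin K)) ∈ T
      · have eA : ∀ aa : ∀ i, InA X Y M W (Finset.univ \ {k}) i,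
            ∑ r : Fin (M k), ∑ b ∈ Finset.univ.filter
              (fun b : ∀ i, OutA X M i => ∀ i ∈ T, b i = outShift (X := X) r bT i),
              Z (Fmap r aa) b
            = ∑ r : Fin (M k), ∑ b ∈ Finset.univ.filter
              (fun b : ∀ i, OutA X M i => ∀ i ∈ T, b i = outShift (X := X) r bT i),
              Z (Fsome aa) b :=
          fun aa => Finset.sum_congr rfl fun r _ =>
            h2 T _ _ (Fmap_Fsome_agree r aa hn) _
        refine (eA a).trans (((sum_marg_shift Z (Fsome a) hkT bT).trans
          ((h2 (T.erase (some k)) (Fsome a) (Fsome a')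
              (Fsome_agree_erase hn hagree) bT).trans
            (sum_marg_shift Z (Fsome a') hkT bT).symm)).trans (eA a').symm)
      · exact Finset.sum_congr rfl fun r _ =>
          h2 T _ _ (Fmap_agree_of_not_mem r hn hkT hagree) _

lemma Fmap_mkIn [NeZero (M k)] (hk : ∀ j, k ∉ W j) (r : Fin (M k))
    (w : ∀ j, Fin (M j)) (y : ∀ j, Y j) :
    Fmap (X := X) (W := W) r (mkIn w y) = mkIn (msgShift r w) y := by
  funext i
  cases i with
  | none =>
      show Function.update w k (w k + r) = msgShift r w
      funext j
      by_cases hj : j = k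
      · subst hj
        rw [msgShift_apply_eq, Function.update_self]
      · rw [msgShift_apply_ne r hj, Function.update_of_ne hj]
  | some j =>
      refine Prod.ext rfl ?_
      funext i'
      have hne : i'.1 ≠ k := fun hh => hk j (hh ▸ i'.2.1)
      show (if h : j = k then w i'.1 else w i'.1) = msgShift r w i'.1
      rw [msgShift_apply_ne r hne]
      by_cases h : j = k <;> simp [h]

lemma outShift_mkOut [NeZero (M k)] (r : Fin (M k)) (x : X) (w : ∀ j, Fin (M j)) :
    outShift (X := X) r (mkOut x w) = mkOut x (msgShift r w) := by
  funext i
  cases i with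
  | none => rfl
  | some j =>
      by_cases hj : j = k
      · subst hj
        rw [outShift_apply_eq]
        show w j + r = msgShift r w j
        rw [msgShift_apply_eq]
      · rw [outShift_apply_ne r hj]
        show w j = msgShift r w j
        rw [msgShift_apply_ne r hj]

lemma etaK_toRestr [NeZero (M k)] (hk : ∀ j, k ∉ W j)
    (N : X → (∀ j, Y j) → ℝ)
    (Z : (∀ i, InA X Y M W Finset.univ i) → (∀ i, OutA X M i) → ℝ) :
    etaK M W (Finset.univ \ {k}) N (toRestr (k := k) Z) = etaK M W Finset.univ N Z := by
  have hMk : (0:ℝ) < (M k : ℝ) := by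
    exact_mod_cast Nat.pos_of_ne_zero (NeZero.ne _)
  unfold etaK
  congr 1
  have step : ∀ (w : ∀ j, Fin (M j)) (x : X) (y : ∀ j, Y j),
      N x y * toRestr (k := k) Z (mkIn w y) (mkOut x w)
        = (M k : ℝ)⁻¹ * ∑ r : Fin (M k),
            N x y * Z (mkIn (msgShift r w) y) (mkOut x (msgShift r w)) := by
    intro w x y
    simp only [toRestr, Fmap_mkIn hk, outShift_mkOut, Finset.mul_sum]
    exact Finset.sum_congr rfl fun r _ => by ring
  calc
    ∑ w : ∀ j, Fin (M j), ∑ x : X, ∑ y : ∀ j, Y j,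
        N x y * toRestr (k := k) Z (mkIn w y) (mkOut x w)
      = ∑ w : ∀ j, Fin (M j), ∑ x : X, ∑ y : ∀ j, Y j, (M k : ℝ)⁻¹ *
          ∑ r : Fin (M k),
            N x y * Z (mkIn (msgShift r w) y) (mkOut x (msgShift r w)) := by
        exact Finset.sum_congr rfl fun w _ => Finset.sum_congr rfl fun x _ =>
          Finset.sum_congr rfl fun y _ => step w x y
    _ = (M k : ℝ)⁻¹ * ∑ w : ∀ j, Fin (M j), ∑ x : X, ∑ y : ∀ j, Y j,
          ∑ r : Fin (M k),
            N x y * Z (mkIn (msgShift r w) y) (mkOut x (msgShift r w)) := by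
        simp only [← Finset.mul_sum]
    _ = (M k : ℝ)⁻¹ * ∑ r : Fin (M k), ∑ w : ∀ j, Fin (M j), ∑ x : X,
          ∑ y : ∀ j, Y j,
            N x y * Z (mkIn (msgShift r w) y) (mkOut x (msgShift r w)) := by
        congr 1
        calc
          ∑ w : ∀ j, Fin (M j), ∑ x : X, ∑ y : ∀ j, Y j, ∑ r : Fin (M k),
              N x y * Z (mkIn (msgShift r w) y) (mkOut x (msgShift r w))
            = ∑ w : ∀ j, Fin (M j), ∑ x : X, ∑ r : Fin (M k), ∑ y : ∀ j, Y j,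
              N x y * Z (mkIn (msgShift r w) y) (mkOut x (msgShift r w)) := by
              exact Finset.sum_congr rfl fun w _ => Finset.sum_congr rfl fun x _ =>
                Finset.sum_comm
          _ = ∑ w : ∀ j, Fin (M j), ∑ r : Fin (M k), ∑ x : X, ∑ y : ∀ j, Y j,
              N x y * Z (mkIn (msgShift r w) y) (mkOut x (msgShift r w)) := by
              exact Finset.sum_congr rfl fun w _ => Finset.sum_comm
          _ = ∑ r : Fin (M k), ∑ w : ∀ j, Fin (M j), ∑ x : X, ∑ y : ∀ j, Y j,
              N x y * Z (mkIn (msgShift r w) y) (mkOut x (msgShift r w)) := by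
              exact Finset.sum_comm
    _ = (M k : ℝ)⁻¹ * ∑ r : Fin (M k), ∑ w : ∀ j, Fin (M j), ∑ x : X,
          ∑ y : ∀ j, Y j, N x y * Z (mkIn w y) (mkOut x w) := by
        congr 1
        refine Finset.sum_congr rfl fun r _ => ?_
        exact Equiv.sum_comp (msgShift r) (fun w => ∑ x : X, ∑ y : ∀ j, Y j,
          N x y * Z (mkIn w y) (mkOut x w))
    _ = ∑ w : ∀ j, Fin (M j), ∑ x : X, ∑ y : ∀ j, Y j,
          N x y * Z (mkIn w y) (mkOut x w) := by
        rw [Finset.sum_const, Finset.card_univ, Fintype.card_fin, nsmul_eq_mul,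
          ← mul_assoc, inv_mul_cancel₀ hMk.ne', one_mul]

end Stmt7Aux

/-- if no user has `W_k` as side information, then removing user `k`'s
own side information does not change the optimal NS-assisted joint success
probability. -/


theorem stmt7 (X : Type) [Fintype X] (Y : Fin K → Type) [∀ k, Fintype (Y k)]
    (M : Fin K → ℕ) (hM : ∀ k, 0 < M k)
    (N : X → (∀ k, Y k) → ℝ) (hN : IsKUserKernel N)
    (W : Fin K → Finset (Fin K)) (hW : ∀ k, k ∉ W k)
    (k : Fin K) (hk : ∀ j, k ∉ W j) :
    etaStarK X Y M W N Finset.univ = etaStarK X Y M W N (Finset.univ \ {k}) := by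
  classical
  haveI : NeZero (M k) := ⟨(hM k).ne'⟩
  unfold etaStarK
  congr 1
  ext e
  simp only [Set.mem_setOf_eq]
  constructor
  · rintro ⟨Z, hZ, rfl⟩
    exact ⟨Stmt7Aux.toRestr (k := k) Z, Stmt7Aux.isNS_toRestr hZ,
      (Stmt7Aux.etaK_toRestr hk N Z).symm⟩
  · rintro ⟨Z', hZ', rfl⟩
    exact ⟨Stmt7Aux.toFull Z', Stmt7Aux.isNS_toFull hZ',
      (Stmt7Aux.etaK_toFull N).symm⟩
end
end

section
/- Consider a K-user broadcast channel N(y1,...,yK|x) with message sets {1,...,M_k} and side-information sets W_k = {k+1, k+2, ..., K} for all k ∈ [K], and fully ((K+1)-partite) NS-assisted coding schemes. Then η*_NS(SI = ∅) = η*_NS(SI = [K]), and consequently η*_NS(SI = 𝒦) = η*_NS(SI = 𝒦') for all subsets 𝒦, 𝒦' ⊆ [K]. -/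
open scoped BigOperators Classical
open Finset Filter

noncomputable section

variable {K : ℕ}

section Aux8

variable {K : ℕ} {X : Type} [Fintype X] {Y : Fin K → Type} [∀ k, Fintype (Y k)]
  {M : Fin K → ℕ} {W : Fin K → Finset (Fin K)}

/-- Marginal of a box on the set `T` of parties, with outputs prescribed by `c`. -/
def marg {A : Type} (Z : A → (∀ i : Option (Fin K), OutA X M i) → ℝ)
    (T : Finset (Option (Fin K))) (a : A) (c : ∀ i, OutA X M i) : ℝ :=
  ∑ b ∈ Finset.univ.filter (fun b : ∀ i, OutA X M i => ∀ i ∈ T, b i = c i), Z a b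

lemma marg_ns {A : Option (Fin K) → Type} [∀ i, Fintype (A i)]
    {Z : (∀ i, A i) → (∀ i : Option (Fin K), OutA X M i) → ℝ} (hZ : IsNSBoxFam Z)
    (T : Finset (Option (Fin K))) {a a' : ∀ i, A i} (h : ∀ i ∈ T, a i = a' i)
    (c : ∀ i, OutA X M i) : marg Z T a c = marg Z T a' c :=
  hZ.2.2 T a a' h c

lemma marg_congr_out {A : Type} (Z : A → (∀ i : Option (Fin K), OutA X M i) → ℝ)
    (T : Finset (Option (Fin K))) (a : A) {c c' : ∀ i, OutA X M i}
    (h : ∀ i ∈ T, c i = c' i) : marg Z T a c = marg Z T a c' := by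
  unfold marg
  congr 1
  ext b
  simp only [Finset.mem_filter, Finset.mem_univ, true_and]
  exact ⟨fun hb i hi => (hb i hi).trans (h i hi), fun hb i hi => (hb i hi).trans (h i hi).symm⟩

lemma marg_empty {A : Type} (Z : A → (∀ i : Option (Fin K), OutA X M i) → ℝ) (a : A)
    (c : ∀ i, OutA X M i) : marg Z (∅ : Finset (Option (Fin K))) a c = ∑ b, Z a b := by
  unfold marg
  congr 1
  ext b
  simp

lemma marg_erase {A : Type} (Z : A → (∀ i : Option (Fin K), OutA X M i) → ℝ)
    (T : Finset (Option (Fin K))) {i₀ : Option (Fin K)} (hi : i₀ ∈ T) (a : A)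
    (c : ∀ i, OutA X M i) :
    ∑ v : OutA X M i₀, marg Z T a (Function.update c i₀ v) = marg Z (T.erase i₀) a c := by
  unfold marg
  rw [← Finset.sum_fiberwise
    (Finset.univ.filter (fun b : ∀ i, OutA X M i => ∀ i ∈ T.erase i₀, b i = c i))
    (fun b => b i₀) (Z a)]
  refine Finset.sum_congr rfl fun v _ => Finset.sum_congr ?_ fun _ _ => rfl
  rw [Finset.filter_filter]
  ext b
  simp only [Finset.mem_filter, Finset.mem_univ, true_and, Finset.mem_erase]
  constructor
  · intro hb
    refine ⟨fun i hii => ?_, ?_⟩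
    · rw [hb i hii.2, Function.update_of_ne hii.1]
    · rw [hb i₀ hi, Function.update_self]
  · rintro ⟨hb, hv⟩ i hiT
    by_cases hii : i = i₀
    · subst hii; rw [hv, Function.update_self]
    · rw [hb i ⟨hii, hiT⟩, Function.update_of_ne hii]

variable [∀ k, NeZero (M k)]

lemma sum_update (k₀ : Fin K) (f : (∀ k, Fin (M k)) → ℝ) :
    ∑ t : ∀ k, Fin (M k), ∑ s : Fin (M k₀), f (Function.update t k₀ s)
      = (M k₀ : ℝ) * ∑ t, f t := by
  have hinv : Function.Involutive
      (fun p : (∀ k, Fin (M k)) × Fin (M k₀) => (Function.update p.1 k₀ p.2, p.1 k₀)) := by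
    rintro ⟨t, s⟩
    refine Prod.ext ?_ ?_
    · funext k
      by_cases hk : k = k₀
      · subst hk; simp
      · simp [Function.update_of_ne hk]
    · simp
  have h1 : ∑ p : (∀ k, Fin (M k)) × Fin (M k₀), f (Function.update p.1 k₀ p.2)
      = ∑ p : (∀ k, Fin (M k)) × Fin (M k₀), f p.1 :=
    Fintype.sum_bijective _ hinv.bijective _ _ (fun p => rfl)
  rw [Fintype.sum_prod_type] at h1
  rw [h1, Fintype.sum_prod_type]
  simp [Finset.sum_const, Finset.card_univ, nsmul_eq_mul, Finset.mul_sum]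

/-- Shifted inputs: the transmitter input gets shifted by `t`, and user `k` gets as
side information the shifted transmitter input. -/
def shiftIn (𝒦 : Finset (Fin K)) (a : ∀ i, InA X Y M W ∅ i) (t : ∀ k, Fin (M k)) :
    ∀ i, InA X Y M W 𝒦 i
  | none => fun k => a none k + t k
  | some k => ((a (some k)).1, fun j => a none j.1 + t j.1)

/-- Per-party shift of the outputs by `t`. -/
def shOut (t : ∀ k, Fin (M k)) : ∀ i : Option (Fin K), OutA X M i → OutA X M i
  | none => id
  | some k => (fun v => v + t k : Fin (M k) → Fin (M k))

/-- Inverse per-party shift. -/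
def shOutInv (t : ∀ k, Fin (M k)) : ∀ i : Option (Fin K), OutA X M i → OutA X M i
  | none => id
  | some k => (fun v => v - t k : Fin (M k) → Fin (M k))

lemma shOut_left (t : ∀ k, Fin (M k)) (i : Option (Fin K)) (v : OutA X M i) :
    shOutInv (M := M) (X := X) t i (shOut t i v) = v := by
  cases i <;> simp [shOut, shOutInv] <;> exact @add_sub_cancel_right (Fin (M _)) _ v _

lemma shOut_right (t : ∀ k, Fin (M k)) (i : Option (Fin K)) (v : OutA X M i) :
    shOut (M := M) (X := X) t i (shOutInv t i v) = v := by
  cases i <;> simp [shOut, shOutInv] <;> exact @sub_add_cancel (Fin (M _)) _ v _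

/-- The box obtained from a `𝒦`-side-information box by internally shifting all
messages by a uniformly random `t`; it no longer needs any side information. -/
def shiftBox (𝒦 : Finset (Fin K)) (Z : (∀ i, InA X Y M W 𝒦 i) → (∀ i, OutA X M i) → ℝ) :
    (∀ i, InA X Y M W ∅ i) → (∀ i, OutA X M i) → ℝ :=
  fun a b => (∏ k, (M k : ℝ))⁻¹ * ∑ t, Z (shiftIn 𝒦 a t) (fun i => shOut t i (b i))

lemma prodM_ne_zero : (∏ k, (M k : ℝ)) ≠ 0 :=
  Finset.prod_ne_zero_iff.2 fun k _ => Nat.cast_ne_zero.2 (NeZero.ne _)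

lemma cardPi_eq : ((Fintype.card (∀ k, Fin (M k)) : ℕ) : ℝ) = ∏ k, (M k : ℝ) := by
  simp [Fintype.card_pi]

lemma marg_shiftBox (𝒦 : Finset (Fin K)) (Z : (∀ i, InA X Y M W 𝒦 i) → (∀ i, OutA X M i) → ℝ)
    (T : Finset (Option (Fin K))) (a : ∀ i, InA X Y M W ∅ i) (c : ∀ i, OutA X M i) :
    marg (shiftBox 𝒦 Z) T a c
      = (∏ k, (M k : ℝ))⁻¹ * ∑ t, marg Z T (shiftIn 𝒦 a t) (fun i => shOut t i (c i)) := by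
  unfold marg shiftBox
  rw [← Finset.mul_sum]
  congr 1
  rw [Finset.sum_comm]
  refine Finset.sum_congr rfl fun t _ => ?_
  refine Finset.sum_nbij' (fun b => fun i => shOut t i (b i))
    (fun b => fun i => shOutInv t i (b i)) ?_ ?_ ?_ ?_ ?_
  · intro b hb
    simp only [Finset.mem_filter, Finset.mem_univ, true_and] at hb ⊢
    intro i hi
    rw [hb i hi]
  · intro b hb
    simp only [Finset.mem_filter, Finset.mem_univ, true_and] at hb ⊢
    intro i hi
    rw [hb i hi, shOut_left]
  · intro b _
    funext i
    exact shOut_left t i (b i)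
  · intro b _
    funext i
    exact shOut_right t i (b i)
  · intro b _
    rfl

lemma shiftIn_agree_off (𝒦 : Finset (Fin K)) (hW : ∀ k, W k = Finset.univ.filter (fun j => k < j))
    (a : ∀ i, InA X Y M W ∅ i) {t t' : ∀ k, Fin (M k)} {k₀ : Fin K}
    (ht : ∀ j, j ≠ k₀ → t j = t' j) {k : Fin K} (hk : k₀ ≤ k) :
    shiftIn 𝒦 a t (some k) = shiftIn 𝒦 a t' (some k) := by
  show (_, _) = (_, _)
  refine Prod.ext rfl ?_
  funext j
  have h2 : (j.1 : Fin K) ∈ Finset.univ.filter (fun j => k < j) := (hW k) ▸ j.2.1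
  have hj : k < j.1 := (Finset.mem_filter.mp h2).2
  show a none j.1 + t j.1 = a none j.1 + t' j.1
  rw [ht j.1 (lt_of_le_of_lt hk hj).ne']

/-- Coordinate access to user outputs, with the type unfolded. -/
abbrev outAt (c : ∀ i : Option (Fin K), OutA X M i) (k : Fin K) : Fin (M k) := c (some k)

lemma peel (𝒦 : Finset (Fin K)) (hW : ∀ k, W k = Finset.univ.filter (fun j => k < j))
    {Z : (∀ i, InA X Y M W 𝒦 i) → (∀ i, OutA X M i) → ℝ} (hZ : IsNSBoxFam Z) :
    ∀ (n : ℕ) (U : Finset (Fin K)), U.card = n →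
      ∀ (a : ∀ i, InA X Y M W ∅ i) (c : ∀ i, OutA X M i),
      ∑ t, marg Z (U.image some) (shiftIn 𝒦 a t) (fun i => shOut t i (c i))
        = (∏ k ∈ U, (M k : ℝ))⁻¹ * (Fintype.card (∀ k, Fin (M k)) : ℝ) := by
  intro n
  induction n with
  | zero =>
    intro U hU a c
    rw [Finset.card_eq_zero] at hU
    subst hU
    simp only [Finset.image_empty, Finset.prod_empty, inv_one, one_mul]
    rw [Finset.sum_congr rfl (fun t _ => marg_empty Z _ _)]
    rw [Finset.sum_congr rfl (fun t _ => hZ.2.1 _)]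
    simp [Finset.card_univ]
  | succ n ih =>
    intro U hU a c
    have hne : U.Nonempty := Finset.card_pos.mp (hU ▸ n.succ_pos)
    set k₀ := U.min' hne with hk₀
    have hk₀U : k₀ ∈ U := U.min'_mem hne
    set T := U.image some with hT
    have hsome : (some k₀ : Option (Fin K)) ∈ T := Finset.mem_image_of_mem _ hk₀U
    -- Step B: for every t, summing over the k₀-fiber drops party `some k₀`.
    have hB : ∀ t : ∀ k, Fin (M k),
        ∑ s : Fin (M k₀),
          marg Z T (shiftIn 𝒦 a (Function.update t k₀ s))
            (fun i => shOut (Function.update t k₀ s) i (c i))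
        = marg Z (T.erase (some k₀)) (shiftIn 𝒦 a t) (fun i => shOut t i (c i)) := by
      intro t
      have step1 : ∀ s : Fin (M k₀),
          marg Z T (shiftIn 𝒦 a (Function.update t k₀ s))
            (fun i => shOut (Function.update t k₀ s) i (c i))
          = marg Z T (shiftIn 𝒦 a t)
              (Function.update (fun i => shOut t i (c i)) (some k₀) (outAt c k₀ + s)) := by
        intro s
        have hagree : ∀ i ∈ T, shiftIn 𝒦 a (Function.update t k₀ s) i = shiftIn 𝒦 a t i := by
          intro i hi
          rw [hT, Finset.mem_image] at hi
          obtain ⟨k, hkU, rfl⟩ := hi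
          exact shiftIn_agree_off 𝒦 hW a
            (fun j hj => Function.update_of_ne hj s t) (U.min'_le k hkU)
        rw [marg_ns hZ T hagree]
        congr 1
        funext i
        cases i with
        | none =>
          exact (Function.update_of_ne (Option.some_ne_none k₀).symm _ _).symm
        | some k =>
          by_cases hk : k = k₀
          · subst hk
            refine Eq.trans ?_ (Function.update_self _ _ _).symm
            show outAt c k₀ + Function.update t k₀ s k₀ = outAt c k₀ + s
            rw [Function.update_self]
          · refine Eq.trans ?_ (Function.update_of_ne (by simpa using hk) _ _).symm
            show outAt c k + Function.update t k₀ s k = outAt c k + t k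
            rw [Function.update_of_ne hk]
      rw [Finset.sum_congr rfl (fun s _ => step1 s)]
      rw [show (∑ s : Fin (M k₀), marg Z T (shiftIn 𝒦 a t)
            (Function.update (fun i => shOut t i (c i)) (some k₀) (outAt c k₀ + s)))
          = ∑ v : OutA X M (some k₀), marg Z T (shiftIn 𝒦 a t)
            (Function.update (fun i => shOut t i (c i)) (some k₀) v) from
        Fintype.sum_bijective _ (Equiv.addLeft (outAt c k₀)).bijective _ _ (fun s => rfl)]
      rw [marg_erase Z T hsome]
    -- Step A : average over the k₀ coordinate, then apply the induction hypothesis.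
    have hA := sum_update k₀ (fun t => marg Z T (shiftIn 𝒦 a t) (fun i => shOut t i (c i)))
    rw [Finset.sum_congr rfl (fun t _ => hB t)] at hA
    have herase : T.erase (some k₀) = (U.erase k₀).image some := by
      rw [hT, Finset.image_erase (Option.some_injective _)]
    have hcard : (U.erase k₀).card = n := by
      rw [Finset.card_erase_of_mem hk₀U, hU]; rfl
    rw [herase] at hA
    rw [ih (U.erase k₀) hcard a c] at hA
    have hMk₀ : (M k₀ : ℝ) ≠ 0 := Nat.cast_ne_zero.2 (NeZero.ne _)
    have hS : ∑ t, marg Z T (shiftIn 𝒦 a t) (fun i => shOut t i (c i))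
        = (M k₀ : ℝ)⁻¹ * ((∏ k ∈ U.erase k₀, (M k : ℝ))⁻¹
            * (Fintype.card (∀ k, Fin (M k)) : ℝ)) := by
      rw [hA, inv_mul_cancel_left₀ hMk₀]
    rw [hS, ← Finset.mul_prod_erase U _ hk₀U, mul_inv, mul_assoc]

lemma shiftBox_sum_one (𝒦 : Finset (Fin K))
    {Z : (∀ i, InA X Y M W 𝒦 i) → (∀ i, OutA X M i) → ℝ} (hZ : IsNSBoxFam Z)
    (a : ∀ i, InA X Y M W ∅ i) : ∑ b, shiftBox 𝒦 Z a b = 1 := by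
  unfold shiftBox
  rw [← Finset.mul_sum, Finset.sum_comm]
  have : ∀ t : ∀ k, Fin (M k),
      ∑ b : ∀ i, OutA X M i, Z (shiftIn 𝒦 a t) (fun i => shOut t i (b i)) = 1 := by
    intro t
    rw [Fintype.sum_bijective (fun b : ∀ i, OutA X M i => fun i => shOut t i (b i))
      ⟨fun b b' hb => ?_, fun b => ⟨fun i => shOutInv t i (b i), funext fun i => shOut_right t i (b i)⟩⟩
      _ (fun b => Z (shiftIn 𝒦 a t) b) (fun b => rfl)]
    · exact hZ.2.1 _
    · funext i
      have := congrFun hb i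
      have h2 := congrArg (shOutInv t i) this
      rwa [shOut_left, shOut_left] at h2
  rw [Finset.sum_congr rfl fun t _ => this t]
  rw [Finset.sum_const, Finset.card_univ, nsmul_eq_mul, mul_one, cardPi_eq,
    inv_mul_cancel₀ prodM_ne_zero]

lemma shiftBox_ns (𝒦 : Finset (Fin K)) (hW : ∀ k, W k = Finset.univ.filter (fun j => k < j))
    {Z : (∀ i, InA X Y M W 𝒦 i) → (∀ i, OutA X M i) → ℝ} (hZ : IsNSBoxFam Z) :
    IsNSBoxFam (shiftBox 𝒦 Z) := by
  refine ⟨?_, ?_, ?_⟩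
  · intro a b
    exact mul_nonneg (inv_nonneg.2 (Finset.prod_nonneg fun k _ => Nat.cast_nonneg _))
      (Finset.sum_nonneg fun t _ => hZ.1 _ _)
  · intro a
    exact shiftBox_sum_one 𝒦 hZ a
  · intro T a a' h bT
    show marg (shiftBox 𝒦 Z) T a bT = marg (shiftBox 𝒦 Z) T a' bT
    rw [marg_shiftBox, marg_shiftBox]
    by_cases hnone : none ∈ T
    · congr 1
      refine Finset.sum_congr rfl fun t _ => ?_
      refine marg_ns hZ T (fun i hi => ?_) _
      cases i with
      | none =>
        funext k
        show a none k + t k = a' none k + t k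
        rw [h none hnone]
      | some k =>
        show (_, _) = (_, _)
        have h1 : a (some k) = a' (some k) := h _ hi
        have h2 : a none = a' none := h none hnone
        refine Prod.ext ?_ ?_
        · show (a (some k)).1 = (a' (some k)).1
          rw [h1]
        · funext j
          show a none j.1 + t j.1 = a' none j.1 + t j.1
          rw [h2]
    · have hTU : T = (Finset.univ.filter (fun k => some k ∈ T)).image some := by
        ext i
        cases i with
        | none => simpa using hnone
        | some k => simp
      rw [hTU, peel 𝒦 hW hZ _ _ rfl a bT, peel 𝒦 hW hZ _ _ rfl a' bT]


lemma shiftIn_mkIn (𝒦 : Finset (Fin K)) (w t : ∀ k, Fin (M k)) (y : ∀ k, Y k) :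
    shiftIn (X := X) (W := W) 𝒦 (mkIn w y) t = mkIn (fun k => w k + t k) y := by
  funext i
  cases i with
  | none => rfl
  | some k => rfl

lemma shOut_mkOut (w t : ∀ k, Fin (M k)) (x : X) :
    (fun i => shOut t i (mkOut x w i)) = mkOut x (fun k => w k + t k) := by
  funext i
  cases i with
  | none => rfl
  | some k => rfl

lemma shiftBox_eta (𝒦 : Finset (Fin K)) (N : X → (∀ k, Y k) → ℝ)
    (Z : (∀ i, InA X Y M W 𝒦 i) → (∀ i, OutA X M i) → ℝ) :
    etaK M W ∅ N (shiftBox 𝒦 Z) = etaK M W 𝒦 N Z := by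
  unfold etaK
  have key : ∀ (w : ∀ k, Fin (M k)) (y : ∀ k, Y k) (x : X),
      shiftBox 𝒦 Z (mkIn w y) (mkOut x w)
        = (∏ k, (M k : ℝ))⁻¹ * ∑ u, Z (mkIn u y) (mkOut x u) := by
    intro w y x
    unfold shiftBox
    congr 1
    refine Fintype.sum_bijective (fun t => fun k => w k + t k) ?_ _ _ (fun t => ?_)
    · refine ⟨fun t t' hh => funext fun k => ?_, fun u => ⟨fun k => u k - w k, funext fun k => ?_⟩⟩
      · exact add_left_cancel (congrFun hh k)
      · simp
    · rw [shiftIn_mkIn, shOut_mkOut]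
  simp only [key]
  rw [Finset.sum_const, Finset.card_univ, nsmul_eq_mul, cardPi_eq, ← mul_assoc,
    inv_mul_cancel₀ prodM_ne_zero, one_mul]
  calc ∑ x : X, ∑ y : ∀ k, Y k, N x y * ((∏ k, (M k : ℝ))⁻¹ * ∑ u, Z (mkIn u y) (mkOut x u))
      = ∑ x : X, ∑ y : ∀ k, Y k, (∏ k, (M k : ℝ))⁻¹
          * ∑ u, N x y * Z (mkIn u y) (mkOut x u) := by
        refine Finset.sum_congr rfl fun x _ => Finset.sum_congr rfl fun y _ => ?_
        rw [mul_left_comm, Finset.mul_sum]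
    _ = (∏ k, (M k : ℝ))⁻¹ * ∑ x : X, ∑ y : ∀ k, Y k, ∑ u, N x y * Z (mkIn u y) (mkOut x u) := by
        simp_rw [← Finset.mul_sum]
    _ = (∏ k, (M k : ℝ))⁻¹
          * ∑ u, ∑ x : X, ∑ y : ∀ k, Y k, N x y * Z (mkIn u y) (mkOut x u) := by
        congr 1
        rw [Finset.sum_congr rfl (fun x _ => Finset.sum_comm), Finset.sum_comm]

/-- Forgetting side information: a party map from richer inputs to poorer ones. -/
def forgetIn (𝒦 : Finset (Fin K)) : ∀ i : Option (Fin K), InA X Y M W 𝒦 i → InA X Y M W ∅ i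
  | none => fun w => w
  | some _ => fun p => (p.1, fun j => absurd j.2.2 (Finset.notMem_empty _))

lemma forgetIn_mkIn (𝒦 : Finset (Fin K)) (w : ∀ k, Fin (M k)) (y : ∀ k, Y k) :
    (fun i => forgetIn (X := X) (W := W) 𝒦 i (mkIn w y i)) = mkIn (𝒦 := (∅ : Finset (Fin K))) w y := by
  funext i
  cases i with
  | none => rfl
  | some k =>
    show (_, _) = (_, _)
    refine Prod.ext rfl ?_
    funext j
    exact absurd j.2.2 (Finset.notMem_empty _)

lemma forget_ns (𝒦 : Finset (Fin K))
    {Z : (∀ i, InA X Y M W ∅ i) → (∀ i, OutA X M i) → ℝ} (hZ : IsNSBoxFam Z) :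
    IsNSBoxFam (fun (a : ∀ i, InA X Y M W 𝒦 i) b => Z (fun i => forgetIn 𝒦 i (a i)) b) :=
  ⟨fun a b => hZ.1 _ b, fun a => hZ.2.1 _,
    fun T a a' h bT => hZ.2.2 T _ _ (fun i hi => congrArg (forgetIn 𝒦 i) (h i hi)) bT⟩

lemma forget_eta (𝒦 : Finset (Fin K)) (N : X → (∀ k, Y k) → ℝ)
    (Z : (∀ i, InA X Y M W ∅ i) → (∀ i, OutA X M i) → ℝ) :
    etaK M W 𝒦 N (fun a b => Z (fun i => forgetIn 𝒦 i (a i)) b) = etaK M W ∅ N Z := by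
  unfold etaK
  congr 1
  refine Finset.sum_congr rfl fun w _ => Finset.sum_congr rfl fun x _ =>
    Finset.sum_congr rfl fun y _ => ?_
  show N x y * Z (fun i => forgetIn 𝒦 i (mkIn w y i)) (mkOut x w) = _
  rw [forgetIn_mkIn]

lemma achievable_set_eq (𝒦 : Finset (Fin K))
    (hW : ∀ k, W k = Finset.univ.filter (fun j => k < j)) (N : X → (∀ k, Y k) → ℝ) :
    {e : ℝ | ∃ Z : (∀ i, InA X Y M W 𝒦 i) → (∀ i, OutA X M i) → ℝ,
        IsNSBoxFam Z ∧ e = etaK M W 𝒦 N Z}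
      = {e : ℝ | ∃ Z : (∀ i, InA X Y M W ∅ i) → (∀ i, OutA X M i) → ℝ,
        IsNSBoxFam Z ∧ e = etaK M W ∅ N Z} := by
  ext e
  simp only [Set.mem_setOf_eq]
  constructor
  · rintro ⟨Z, hZ, rfl⟩
    exact ⟨shiftBox 𝒦 Z, shiftBox_ns 𝒦 hW hZ, (shiftBox_eta 𝒦 N Z).symm⟩
  · rintro ⟨Z, hZ, rfl⟩
    exact ⟨fun a b => Z (fun i => forgetIn 𝒦 i (a i)) b, forget_ns 𝒦 hZ,
      (forget_eta 𝒦 N Z).symm⟩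

end Aux8

/-- if the side-information sets are `W_k = {k+1, …, K}` for all
`k ∈ [K]`, then the optimal NS-assisted joint success probability with no side
information equals the one with full side information; consequently it is the same for
every availability pattern `𝒦 ⊆ [K]`. -/
theorem stmt8 (X : Type) [Fintype X] (Y : Fin K → Type) [∀ k, Fintype (Y k)]
    (M : Fin K → ℕ) (hM : ∀ k, 0 < M k)
    (N : X → (∀ k, Y k) → ℝ) (hN : IsKUserKernel N)
    (W : Fin K → Finset (Fin K))
    (hW : ∀ k, W k = Finset.univ.filter (fun j => k < j)) :
    etaStarK X Y M W N ∅ = etaStarK X Y M W N Finset.univ ∧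
    ∀ 𝒦 𝒦' : Finset (Fin K), etaStarK X Y M W N 𝒦 = etaStarK X Y M W N 𝒦' := by
  haveI : ∀ k, NeZero (M k) := fun k => ⟨(hM k).ne'⟩
  have hset : ∀ 𝒦 : Finset (Fin K), etaStarK X Y M W N 𝒦 = etaStarK X Y M W N ∅ := by
    intro 𝒦
    unfold etaStarK
    rw [achievable_set_eq 𝒦 hW N]
  exact ⟨(hset ∅).trans (hset Finset.univ).symm,
    fun 𝒦 𝒦' => (hset 𝒦).trans (hset 𝒦').symm⟩
end
end

section
/- For every channel with state (N, P_S) on finite alphabets and every NS-assisted coding scheme Z with message set {1,...,M}, the induced joint distribution p(s,x,y) = (1/M) Σ_w P_S(s) Z_T(x|w,s) N(y|x,s) satisfies I(X;Y|S) ≥ η(Z)·log₂ M − H_b(η(Z)), where Z_T(x|w,s) = Σ_ŵ Z(x,ŵ|(w,s),y) is the transmitter marginal (which is independent of y by the non-signaling property). -/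
open scoped BigOperators Classical
open Finset Filter

noncomputable section

/-- Conditional mutual information `I(X;Y|S)` (base 2) of a joint pmf `p(s,x,y)`. -/
def condMI {S X Y : Type*} [Fintype S] [Fintype X] [Fintype Y] (p : S → X → Y → ℝ) : ℝ :=
  ∑ s, ∑ x, ∑ y,
    if p s x y = 0 then 0 else
      p s x y * Real.logb 2 (((∑ x', ∑ y', p s x' y') * p s x y) /
        ((∑ y', p s x y') * (∑ x', p s x' y)))

/-- Binary entropy function (base 2), with the `0·log₂ 0 = 0` convention. -/
def Hb (t : ℝ) : ℝ :=
  -(t * Real.logb 2 t) - (1 - t) * Real.logb 2 (1 - t)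

/-- Log-sum inequality (base 2). -/
lemma logSum {ι : Type*} [Fintype ι] (a b : ι → ℝ) (ha : ∀ i, 0 ≤ a i)
    (hb : ∀ i, 0 ≤ b i) (hab : ∀ i, b i = 0 → a i = 0) (hB : 0 < ∑ i, b i) :
    (∑ i, a i) * Real.logb 2 ((∑ i, a i) / ∑ i, b i)
      ≤ ∑ i, if a i = 0 then 0 else a i * Real.logb 2 (a i / b i) := by
  set A := ∑ i, a i with hA
  set B := ∑ i, b i with hBdef
  rcases eq_or_lt_of_le (Finset.sum_nonneg (fun i _ => ha i) : (0:ℝ) ≤ A) with h0 | hApos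
  · -- A = 0 : all a i = 0
    have hz : ∀ i ∈ (Finset.univ : Finset ι), a i = 0 := by
      intro i _
      exact (Finset.sum_eq_zero_iff_of_nonneg (fun i _ => ha i)).mp h0.symm i (Finset.mem_univ i)
    have hA0 : A = 0 := h0.symm
    rw [hA0]
    simp only [zero_mul]
    apply Finset.sum_nonneg
    intro i _
    simp [hz i (Finset.mem_univ i)]
  · -- A > 0 : main case via log x ≤ x - 1
    -- per-point: a i * log(A/B) - term i ≤ (A/B) * b i - a i  (natural log)
    have hlog2 : (0:ℝ) < Real.log 2 := Real.log_pos (by norm_num)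
    have key : ∀ i, a i * Real.log (A / B) -
        (if a i = 0 then 0 else a i * Real.log (a i / b i)) ≤ (A / B) * b i - a i := by
      intro i
      by_cases hai : a i = 0
      · rw [hai, if_pos rfl]
        simpa using mul_nonneg (div_nonneg hApos.le hB.le) (hb i)
      · have hai' : 0 < a i := lt_of_le_of_ne (ha i) (Ne.symm hai)
        have hbi : 0 < b i := by
          rcases lt_or_eq_of_le (hb i) with h | h
          · exact h
          · exact absurd (hab i h.symm) hai
        rw [if_neg hai]
        have hx : (0:ℝ) < A * b i / (B * a i) := by positivity
        have := Real.log_le_sub_one_of_pos hx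
        have hrw : Real.log (A * b i / (B * a i)) =
            Real.log (A / B) - Real.log (a i / b i) := by
          rw [Real.log_div (by positivity) (by positivity),
            Real.log_div (ne_of_gt hApos) (ne_of_gt hB),
            Real.log_div (ne_of_gt hai') (ne_of_gt hbi),
            Real.log_mul (ne_of_gt hApos) (ne_of_gt hbi),
            Real.log_mul (ne_of_gt hB) (ne_of_gt hai')]
          ring
        have h2 : Real.log (A / B) - Real.log (a i / b i) ≤ A * b i / (B * a i) - 1 := by
          rw [← hrw]; exact this
        have h3 : a i * (Real.log (A / B) - Real.log (a i / b i)) ≤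
            a i * (A * b i / (B * a i) - 1) :=
          mul_le_mul_of_nonneg_left h2 (le_of_lt hai')
        calc a i * Real.log (A / B) - a i * Real.log (a i / b i)
            = a i * (Real.log (A / B) - Real.log (a i / b i)) := by ring
          _ ≤ a i * (A * b i / (B * a i) - 1) := h3
          _ = (A / B) * b i - a i := by field_simp
    -- sum the per-point inequalities
    have hsum : A * Real.log (A / B) -
        (∑ i, if a i = 0 then 0 else a i * Real.log (a i / b i)) ≤ 0 := by
      have := Finset.sum_le_sum (fun i (_ : i ∈ Finset.univ) => key i)
      rw [Finset.sum_sub_distrib, ← Finset.sum_mul, Finset.sum_sub_distrib,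
        ← Finset.mul_sum] at this
      calc A * Real.log (A / B) - (∑ i, if a i = 0 then 0 else a i * Real.log (a i / b i))
          ≤ A / B * B - A := this
        _ = 0 := by field_simp; ring
    -- convert to logb
    have hconv : ∀ i, (if a i = 0 then 0 else a i * Real.logb 2 (a i / b i)) =
        (if a i = 0 then 0 else a i * Real.log (a i / b i)) / Real.log 2 := by
      intro i
      by_cases hai : a i = 0
      · simp [hai]
      · rw [if_neg hai, if_neg hai, Real.logb, mul_div_assoc]
    have hconv2 : ∀ x, (if a x = 0 then 0 else a x * Real.log (a x / b x) / Real.log 2) =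
        (if a x = 0 then 0 else a x * Real.log (a x / b x)) / Real.log 2 := by
      intro x; split <;> simp
    simp only [Real.logb, mul_div_assoc']
    simp only [hconv2, ← Finset.sum_div]
    exact (div_le_div_iff_of_pos_right hlog2).mpr (by linarith [hsum])

/-- Binary data-processing inequality for KL divergence (base 2). -/
lemma binaryDP {ι : Type*} [Fintype ι] (p r T : ι → ℝ)
    (hp : ∀ i, 0 ≤ p i) (hr : ∀ i, 0 ≤ r i) (hpr : ∀ i, r i = 0 → p i = 0)
    (hT0 : ∀ i, 0 ≤ T i) (hT1 : ∀ i, T i ≤ 1)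
    (hpsum : ∑ i, p i = 1) (hrsum : ∑ i, r i = 1)
    (hβ1 : ∑ i, r i * T i < 1) :
    (∑ i, p i * T i) * Real.logb 2 ((∑ i, p i * T i) / (∑ i, r i * T i)) +
      (1 - ∑ i, p i * T i) *
        Real.logb 2 ((1 - ∑ i, p i * T i) / (1 - ∑ i, r i * T i))
      ≤ ∑ i, if p i = 0 then 0 else p i * Real.logb 2 (p i / r i) := by
  have hKL0 : (0:ℝ) ≤ ∑ i, if p i = 0 then 0 else p i * Real.logb 2 (p i / r i) := by
    have := logSum p r hp hr hpr (by rw [hrsum]; norm_num)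
    rw [hpsum, hrsum] at this
    simpa using this
  have hβnn : (0:ℝ) ≤ ∑ i, r i * T i :=
    Finset.sum_nonneg fun i _ => mul_nonneg (hr i) (hT0 i)
  rcases eq_or_lt_of_le hβnn with hβ0 | hβpos
  · -- β = 0 : then α = 0 and LHS = 0
    have hz : ∀ i, r i * T i = 0 := fun i =>
      (Finset.sum_eq_zero_iff_of_nonneg (fun i _ => mul_nonneg (hr i) (hT0 i))).mp
        hβ0.symm i (Finset.mem_univ i)
    have hpz : ∀ i, p i * T i = 0 := by
      intro i
      rcases mul_eq_zero.mp (hz i) with h | h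
      · rw [hpr i h, zero_mul]
      · rw [h, mul_zero]
    have hα0 : ∑ i, p i * T i = 0 := Finset.sum_eq_zero fun i _ => hpz i
    rw [hα0, ← hβ0]
    simp
    exact hKL0
  · -- β > 0 : apply logSum to the two pieces
    have h1 := logSum (fun i => p i * T i) (fun i => r i * T i)
      (fun i => mul_nonneg (hp i) (hT0 i)) (fun i => mul_nonneg (hr i) (hT0 i))
      (fun i h => by
        rcases mul_eq_zero.mp h with h' | h'
        · rw [hpr i h', zero_mul]
        · rw [h', mul_zero]) hβpos
    have hsum2r : ∑ i, r i * (1 - T i) = 1 - ∑ i, r i * T i := by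
      have : ∑ i, r i * (1 - T i) = (∑ i, r i) - ∑ i, r i * T i := by
        rw [← Finset.sum_sub_distrib]
        exact Finset.sum_congr rfl fun i _ => by ring
      rw [this, hrsum]
    have hsum2p : ∑ i, p i * (1 - T i) = 1 - ∑ i, p i * T i := by
      have : ∑ i, p i * (1 - T i) = (∑ i, p i) - ∑ i, p i * T i := by
        rw [← Finset.sum_sub_distrib]
        exact Finset.sum_congr rfl fun i _ => by ring
      rw [this, hpsum]
    have h2 := logSum (fun i => p i * (1 - T i)) (fun i => r i * (1 - T i))
      (fun i => mul_nonneg (hp i) (by linarith [hT1 i]))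
      (fun i => mul_nonneg (hr i) (by linarith [hT1 i]))
      (fun i h => by
        rcases mul_eq_zero.mp h with h' | h'
        · rw [hpr i h', zero_mul]
        · rw [h', mul_zero])
      (by rw [hsum2r]; linarith)
    rw [hsum2r, hsum2p] at h2
    -- per-point: the two if-terms add up to the KL term
    have hpt : ∀ i, (if p i * T i = 0 then 0 else
          (p i * T i) * Real.logb 2 ((p i * T i) / (r i * T i))) +
        (if p i * (1 - T i) = 0 then 0 else
          (p i * (1 - T i)) * Real.logb 2 ((p i * (1 - T i)) / (r i * (1 - T i)))) =
        (if p i = 0 then 0 else p i * Real.logb 2 (p i / r i)) := by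
      intro i
      by_cases hpi : p i = 0
      · simp [hpi]
      · have hpi' : 0 < p i := lt_of_le_of_ne (hp i) (Ne.symm hpi)
        by_cases hTi : T i = 0
        · simp [hTi, hpi]
        · have hTi' : 0 < T i := lt_of_le_of_ne (hT0 i) (Ne.symm hTi)
          by_cases hTi1 : T i = 1
          · simp [hTi1, hpi]
          · have hTi1' : T i < 1 := lt_of_le_of_ne (hT1 i) hTi1
            have e1 : (p i * T i) / (r i * T i) = p i / r i :=
              mul_div_mul_right _ _ hTi
            have e2 : (p i * (1 - T i)) / (r i * (1 - T i)) = p i / r i :=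
              mul_div_mul_right _ _ (by linarith)
            rw [if_neg (ne_of_gt (mul_pos hpi' hTi')),
              if_neg (ne_of_gt (mul_pos hpi' (by linarith : (0:ℝ) < 1 - T i))),
              if_neg hpi, e1, e2]
            ring
    calc (∑ i, p i * T i) * Real.logb 2 ((∑ i, p i * T i) / (∑ i, r i * T i)) +
        (1 - ∑ i, p i * T i) *
          Real.logb 2 ((1 - ∑ i, p i * T i) / (1 - ∑ i, r i * T i))
        ≤ (∑ i, if p i * T i = 0 then 0 else
            (p i * T i) * Real.logb 2 ((p i * T i) / (r i * T i))) +
          (∑ i, if p i * (1 - T i) = 0 then 0 else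
            (p i * (1 - T i)) * Real.logb 2 ((p i * (1 - T i)) / (r i * (1 - T i)))) := by
          exact add_le_add h1 h2
      _ = ∑ i, if p i = 0 then 0 else p i * Real.logb 2 (p i / r i) := by
          rw [← Finset.sum_add_distrib]
          exact Finset.sum_congr rfl fun i _ => hpt i

/-- NS Fano inequality for channels with state: for any NS-assisted
coding scheme `Z`, the induced joint distribution
`p(s,x,y) = (1/M) Σ_w P_S(s)·Z_T(x|w,s)·N(y|x,s)` satisfies
`I(X;Y|S) ≥ η(Z)·log₂ M − H_b(η(Z))`, where `Z_T` is the transmitter marginal of `Z`. -/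
theorem stmt9 {X S Y : Type*} [Fintype X] [Fintype S] [Fintype Y]
    (N : X → S → Y → ℝ) (hN : IsStateKernel N) (PS : S → ℝ) (hPS : IsPMF PS)
    (M : ℕ) (Z : (Fin M × S) → Y → X → Fin M → ℝ) (hZ : IsNSBox Z)
    (ZT : Fin M → S → X → ℝ)
    (hZT : ∀ w s y x, ZT w s x = ∑ wh, Z (w, s) y x wh) :
    etaCWS M N PS Z * Real.logb 2 M - Hb (etaCWS M N PS Z)
      ≤ condMI (fun s x y => (M : ℝ)⁻¹ * ∑ w, PS s * ZT w s x * N x s y) := by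
  classical
  obtain ⟨hPSnn, hPSsum⟩ := hPS
  obtain ⟨hNnn, hNsum⟩ := hN
  obtain ⟨hZnn, hZnorm, _hZns2, hZns1⟩ := hZ
  -- degenerate cases
  cases isEmpty_or_nonempty S with
  | inl hS => exact absurd hPSsum (by simp)
  | inr hS => ?_
  cases isEmpty_or_nonempty X with
  | inl hX =>
      have he : etaCWS M N PS Z = 0 := by simp [etaCWS]
      rw [he]
      simp [condMI, Hb]
  | inr hX => ?_
  cases isEmpty_or_nonempty Y with
  | inl hY => exact absurd (hNsum (Classical.arbitrary X) (Classical.arbitrary S)) (by simp)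
  | inr hY => ?_
  rcases Nat.eq_zero_or_pos M with hM0 | hMpos
  · subst hM0
    have he : etaCWS 0 N PS Z = 0 := by simp [etaCWS]
    rw [he]
    simp [condMI, Hb]
  -- main case
  have hMR : (0:ℝ) < M := by exact_mod_cast hMpos
  set y₀ : Y := Classical.arbitrary Y with hy₀
  set s₀ : S := Classical.arbitrary S with hs₀
  set w₀ : Fin M := ⟨0, hMpos⟩ with hw₀
  set q : S → X → ℝ := fun s x => (M:ℝ)⁻¹ * ∑ w, ZT w s x with hqdef
  set ny : S → Y → ℝ := fun s y => ∑ x, q s x * N x s y with hnydef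
  set V : S → X → Y → ℝ := fun s x y => ∑ w, Z (w,s) y x w with hVdef
  set p : S → X → Y → ℝ := fun s x y => PS s * q s x * N x s y with hpdef
  set r : S → X → Y → ℝ := fun s x y => PS s * q s x * ny s y with hrdef
  set T : S → X → Y → ℝ := fun s x y =>
    if q s x = 0 then 0 else (M:ℝ)⁻¹ * V s x y / q s x with hTdef
  -- basic facts
  have hZTnn : ∀ w s x, 0 ≤ ZT w s x := fun w s x => by
    rw [hZT w s y₀ x]; exact Finset.sum_nonneg fun wh _ => hZnn (w,s) y₀ x wh
  have hZTsum : ∀ (w : Fin M) s, ∑ x, ZT w s x = 1 := by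
    intro w s
    calc ∑ x, ZT w s x = ∑ x, ∑ wh, Z (w,s) y₀ x wh :=
          Finset.sum_congr rfl fun x _ => hZT w s y₀ x
      _ = 1 := hZnorm (w,s) y₀
  have hq0 : ∀ s x, 0 ≤ q s x := fun s x =>
    mul_nonneg (by positivity) (Finset.sum_nonneg fun w _ => hZTnn w s x)
  have hqsum : ∀ s, ∑ x, q s x = 1 := by
    intro s
    calc ∑ x, q s x = (M:ℝ)⁻¹ * ∑ x, ∑ w, ZT w s x := by rw [Finset.mul_sum]
      _ = (M:ℝ)⁻¹ * ∑ w : Fin M, ∑ x, ZT w s x := by rw [Finset.sum_comm]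
      _ = (M:ℝ)⁻¹ * ∑ w : Fin M, (1:ℝ) := by
            rw [Finset.sum_congr rfl fun w _ => hZTsum w s]
      _ = 1 := by
            simp only [Finset.sum_const, Finset.card_univ, Fintype.card_fin, nsmul_eq_mul,
              mul_one]
            field_simp
  have hny0 : ∀ s y, 0 ≤ ny s y := fun s y =>
    Finset.sum_nonneg fun x _ => mul_nonneg (hq0 s x) (hNnn x s y)
  have hnysum : ∀ s, ∑ y, ny s y = 1 := by
    intro s
    calc ∑ y, ny s y = ∑ x, ∑ y, q s x * N x s y := Finset.sum_comm
      _ = ∑ x, q s x * ∑ y, N x s y := by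
            exact Finset.sum_congr rfl fun x _ => (Finset.mul_sum _ _ _).symm
      _ = ∑ x, q s x := by
            exact Finset.sum_congr rfl fun x _ => by rw [hNsum x s, mul_one]
      _ = 1 := hqsum s
  have hp0 : ∀ s x y, 0 ≤ p s x y := fun s x y =>
    mul_nonneg (mul_nonneg (hPSnn s) (hq0 s x)) (hNnn x s y)
  have hr0 : ∀ s x y, 0 ≤ r s x y := fun s x y =>
    mul_nonneg (mul_nonneg (hPSnn s) (hq0 s x)) (hny0 s y)
  have hnyge : ∀ s x y, q s x * N x s y ≤ ny s y := by
    intro s x y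
    exact Finset.single_le_sum
      (fun x' (_ : x' ∈ Finset.univ) => mul_nonneg (hq0 s x') (hNnn x' s y))
      (Finset.mem_univ x)
  have hpr : ∀ s x y, r s x y = 0 → p s x y = 0 := by
    intro s x y h
    by_contra hp
    have hPSpos : 0 < PS s := lt_of_le_of_ne (hPSnn s) (by
      intro h'; exact hp (by rw [hpdef]; simp [← h']))
    have hqpos : 0 < q s x := lt_of_le_of_ne (hq0 s x) (by
      intro h'; exact hp (by rw [hpdef]; simp [← h']))
    have hNpos : 0 < N x s y := lt_of_le_of_ne (hNnn x s y) (by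
      intro h'; exact hp (by rw [hpdef]; simp [← h']))
    have : 0 < ny s y := lt_of_lt_of_le (mul_pos hqpos hNpos) (hnyge s x y)
    have : 0 < r s x y := by rw [hrdef]; exact mul_pos (mul_pos hPSpos hqpos) this
    exact absurd h (ne_of_gt this)
  have hV0 : ∀ s x y, 0 ≤ V s x y := fun s x y =>
    Finset.sum_nonneg fun w _ => hZnn (w,s) y x w
  have hVle : ∀ s x y, V s x y ≤ (M:ℝ) * q s x := by
    intro s x y
    have h1 : ∀ w : Fin M, Z (w,s) y x w ≤ ZT w s x := by
      intro w
      rw [hZT w s y x]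
      exact Finset.single_le_sum
        (fun wh (_ : wh ∈ Finset.univ) => hZnn (w,s) y x wh) (Finset.mem_univ w)
    calc V s x y ≤ ∑ w, ZT w s x := Finset.sum_le_sum fun w _ => h1 w
      _ = (M:ℝ) * q s x := by rw [hqdef]; field_simp
  have hVsum : ∀ s y, ∑ x, V s x y = 1 := by
    intro s y
    calc ∑ x, V s x y = ∑ x, ∑ w, Z (w,s) y x w := rfl
      _ = ∑ w : Fin M, ∑ x, Z (w,s) y x w := Finset.sum_comm
      _ = ∑ w : Fin M, ∑ x, Z (w₀,s₀) y x w :=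
          Finset.sum_congr rfl fun w _ => hZns1 (w,s) (w₀,s₀) y w
      _ = ∑ x, ∑ w : Fin M, Z (w₀,s₀) y x w := Finset.sum_comm
      _ = 1 := hZnorm (w₀,s₀) y
  have hqV : ∀ s x y, q s x = 0 → V s x y = 0 := by
    intro s x y h
    have := hVle s x y
    rw [h, mul_zero] at this
    linarith [hV0 s x y]
  have hT0 : ∀ s x y, 0 ≤ T s x y := by
    intro s x y
    rw [hTdef]
    dsimp only
    split
    · exact le_refl 0
    · next h =>
      have hq : 0 < q s x := lt_of_le_of_ne (hq0 s x) (Ne.symm h)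
      exact div_nonneg (mul_nonneg (by positivity) (hV0 s x y)) hq.le
  have hT1 : ∀ s x y, T s x y ≤ 1 := by
    intro s x y
    rw [hTdef]
    dsimp only
    split
    · norm_num
    · next h =>
      have hq : 0 < q s x := lt_of_le_of_ne (hq0 s x) (Ne.symm h)
      rw [div_le_one hq]
      calc (M:ℝ)⁻¹ * V s x y ≤ (M:ℝ)⁻¹ * ((M:ℝ) * q s x) :=
            mul_le_mul_of_nonneg_left (hVle s x y) (by positivity)
        _ = q s x := by field_simp
  have hqT : ∀ s x y, q s x * T s x y ≤ (M:ℝ)⁻¹ * V s x y := by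
    intro s x y
    rw [hTdef]
    dsimp only
    split
    · next h => rw [mul_zero]; exact mul_nonneg (by positivity) (hV0 s x y)
    · next h => rw [mul_comm, div_mul_cancel₀ _ h]
  have hpT : ∀ s x y, p s x y * T s x y = PS s * N x s y * ((M:ℝ)⁻¹ * V s x y) := by
    intro s x y
    rw [hpdef, hTdef]
    dsimp only
    split
    · next h => rw [h, hqV s x y h]; ring
    · next h => field_simp
  -- marginals of p
  have hm2 : ∀ s x, ∑ y', p s x y' = PS s * q s x := by
    intro s x
    calc ∑ y', p s x y' = PS s * q s x * ∑ y', N x s y' := by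
          rw [hpdef]; dsimp only; rw [← Finset.mul_sum]
      _ = PS s * q s x := by rw [hNsum, mul_one]
  have hm1 : ∀ s, ∑ x', ∑ y', p s x' y' = PS s := by
    intro s
    calc ∑ x', ∑ y', p s x' y' = ∑ x', PS s * q s x' :=
          Finset.sum_congr rfl fun x _ => hm2 s x
      _ = PS s * ∑ x', q s x' := by rw [← Finset.mul_sum]
      _ = PS s := by rw [hqsum, mul_one]
  have hm3 : ∀ s y, ∑ x', p s x' y = PS s * ny s y := by
    intro s y
    calc ∑ x', p s x' y = ∑ x', PS s * (q s x' * N x' s y) := by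
          rw [hpdef]; dsimp only
          exact Finset.sum_congr rfl fun x _ => by ring
      _ = PS s * ∑ x', q s x' * N x' s y := by rw [← Finset.mul_sum]
      _ = PS s * ny s y := by rw [hnydef]
  -- the function in the statement equals p
  have hfeq : (fun s x y => (M : ℝ)⁻¹ * ∑ w, PS s * ZT w s x * N x s y) = p := by
    funext s x y
    rw [hpdef, hqdef]
    dsimp only
    rw [show (∑ w, PS s * ZT w s x * N x s y) = PS s * N x s y * ∑ w, ZT w s x by
      rw [Finset.mul_sum]; exact Finset.sum_congr rfl fun w _ => by ring]
    ring
  -- condMI equals the KL sum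
  have hptMI : ∀ s x y,
      (if p s x y = 0 then 0 else
        p s x y * Real.logb 2 (((∑ x', ∑ y', p s x' y') * p s x y) /
          ((∑ y', p s x y') * (∑ x', p s x' y)))) =
      (if p s x y = 0 then 0 else p s x y * Real.logb 2 (p s x y / r s x y)) := by
    intro s x y
    by_cases h : p s x y = 0
    · rw [if_pos h, if_pos h]
    · rw [if_neg h, if_neg h, hm1 s, hm2 s x, hm3 s y]
      have hPSne : PS s ≠ 0 := by
        intro hh; apply h; rw [hpdef]; dsimp only; rw [hh, zero_mul, zero_mul]
      have hqne : q s x ≠ 0 := by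
        intro hh; apply h; rw [hpdef]; dsimp only; rw [hh, mul_zero, zero_mul]
      have hNne : N x s y ≠ 0 := by
        intro hh; apply h; rw [hpdef]; dsimp only; rw [hh, mul_zero]
      have hnypos : 0 < ny s y :=
        lt_of_lt_of_le (mul_pos (lt_of_le_of_ne (hq0 s x) (Ne.symm hqne))
          (lt_of_le_of_ne (hNnn x s y) (Ne.symm hNne))) (hnyge s x y)
      have hnyne : ny s y ≠ 0 := ne_of_gt hnypos
      rw [hrdef]
      dsimp only
      congr 2
      field_simp
  have hcond : condMI (fun s x y => (M : ℝ)⁻¹ * ∑ w, PS s * ZT w s x * N x s y) =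
      ∑ s, ∑ x, ∑ y, (if p s x y = 0 then 0 else
        p s x y * Real.logb 2 (p s x y / r s x y)) := by
    rw [hfeq]
    unfold condMI
    exact Finset.sum_congr rfl fun s _ => Finset.sum_congr rfl fun x _ =>
      Finset.sum_congr rfl fun y _ => hptMI s x y
  -- pass to the product type
  have sum3 : ∀ f : S → X → Y → ℝ,
      ∑ i : S × X × Y, f i.1 i.2.1 i.2.2 = ∑ s, ∑ x, ∑ y, f s x y := by
    intro f
    rw [Fintype.sum_prod_type]
    exact Finset.sum_congr rfl fun a _ => by rw [Fintype.sum_prod_type]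
  set pf : S × X × Y → ℝ := fun i => p i.1 i.2.1 i.2.2 with hpfdef
  set rf : S × X × Y → ℝ := fun i => r i.1 i.2.1 i.2.2 with hrfdef
  set Tf : S × X × Y → ℝ := fun i => T i.1 i.2.1 i.2.2 with hTfdef
  have hpf0 : ∀ i, 0 ≤ pf i := fun i => hp0 _ _ _
  have hrf0 : ∀ i, 0 ≤ rf i := fun i => hr0 _ _ _
  have hprf : ∀ i, rf i = 0 → pf i = 0 := fun i h => hpr _ _ _ h
  have hTf0 : ∀ i, 0 ≤ Tf i := fun i => hT0 _ _ _
  have hTf1 : ∀ i, Tf i ≤ 1 := fun i => hT1 _ _ _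
  have hpfsum : ∑ i, pf i = 1 := by
    rw [hpfdef, sum3]
    calc ∑ s, ∑ x, ∑ y, p s x y = ∑ s, PS s :=
          Finset.sum_congr rfl fun s _ => hm1 s
      _ = 1 := hPSsum
  have hrfsum : ∑ i, rf i = 1 := by
    rw [hrfdef, sum3]
    have : ∀ s, ∑ x, ∑ y, r s x y = PS s := by
      intro s
      calc ∑ x, ∑ y, r s x y = ∑ x, PS s * q s x * ∑ y, ny s y := by
            refine Finset.sum_congr rfl fun x _ => ?_
            rw [hrdef]; dsimp only; rw [← Finset.mul_sum]
        _ = ∑ x, PS s * q s x := by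
            refine Finset.sum_congr rfl fun x _ => ?_
            rw [hnysum s, mul_one]
        _ = PS s * ∑ x, q s x := by rw [← Finset.mul_sum]
        _ = PS s := by rw [hqsum, mul_one]
    rw [Finset.sum_congr rfl fun s _ => this s]
    exact hPSsum
  -- alpha equals eta
  have hαeq : ∑ i, pf i * Tf i = etaCWS M N PS Z := by
    rw [hpfdef, hTfdef]
    rw [sum3 (fun s x y => p s x y * T s x y)]
    unfold etaCWS
    rw [Finset.sum_comm (γ := Fin M) (α := S)]
    rw [Finset.mul_sum]
    refine Finset.sum_congr rfl fun s _ => ?_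
    rw [Finset.sum_comm (γ := Fin M) (α := X)]
    rw [Finset.mul_sum]
    refine Finset.sum_congr rfl fun x _ => ?_
    rw [Finset.sum_comm (γ := Fin M) (α := Y)]
    rw [Finset.mul_sum]
    refine Finset.sum_congr rfl fun y _ => ?_
    calc p s x y * T s x y
        = PS s * N x s y * ((M:ℝ)⁻¹ * ∑ w, Z (w,s) y x w) := by
          rw [hpT s x y, hVdef]
      _ = ∑ w, (M:ℝ)⁻¹ * (PS s * N x s y * Z (w,s) y x w) := by
          rw [Finset.mul_sum, Finset.mul_sum]
          exact Finset.sum_congr rfl fun w _ => by ring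
      _ = (M:ℝ)⁻¹ * ∑ w, PS s * N x s y * Z (w,s) y x w := by
          rw [← Finset.mul_sum]
  -- beta bound
  have hβle : ∑ i, rf i * Tf i ≤ (M:ℝ)⁻¹ := by
    rw [hrfdef, hTfdef, sum3 (fun s x y => r s x y * T s x y)]
    have step1 : ∀ s y, ∑ x, q s x * T s x y ≤ (M:ℝ)⁻¹ := by
      intro s y
      calc ∑ x, q s x * T s x y ≤ ∑ x, (M:ℝ)⁻¹ * V s x y :=
            Finset.sum_le_sum fun x _ => hqT s x y
        _ = (M:ℝ)⁻¹ * ∑ x, V s x y := by rw [← Finset.mul_sum]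
        _ = (M:ℝ)⁻¹ := by rw [hVsum s y, mul_one]
    calc ∑ s, ∑ x, ∑ y, r s x y * T s x y
        = ∑ s, ∑ y, PS s * ny s y * ∑ x, q s x * T s x y := by
          refine Finset.sum_congr rfl fun s _ => ?_
          rw [Finset.sum_comm]
          refine Finset.sum_congr rfl fun y _ => ?_
          rw [Finset.mul_sum]
          refine Finset.sum_congr rfl fun x _ => ?_
          rw [hrdef]; dsimp only; ring
      _ ≤ ∑ s, ∑ y, PS s * ny s y * (M:ℝ)⁻¹ := by
          refine Finset.sum_le_sum fun s _ => Finset.sum_le_sum fun y _ => ?_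
          exact mul_le_mul_of_nonneg_left (step1 s y)
            (mul_nonneg (hPSnn s) (hny0 s y))
      _ = (M:ℝ)⁻¹ * ∑ s, PS s * ∑ y, ny s y := by
          rw [Finset.mul_sum]
          refine Finset.sum_congr rfl fun s _ => ?_
          rw [Finset.mul_sum, Finset.mul_sum]
          exact Finset.sum_congr rfl fun y _ => by ring
      _ = (M:ℝ)⁻¹ := by
          have : ∀ s, PS s * ∑ y, ny s y = PS s := fun s => by rw [hnysum s, mul_one]
          rw [Finset.sum_congr rfl fun s _ => this s, hPSsum, mul_one]
  -- final assembly
  have hcond3 : (∑ i : S × X × Y, if pf i = 0 then 0 else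
        pf i * Real.logb 2 (pf i / rf i)) =
      ∑ s, ∑ x, ∑ y, (if p s x y = 0 then 0 else
        p s x y * Real.logb 2 (p s x y / r s x y)) := by
    rw [hpfdef, hrfdef]
    exact sum3 (fun s x y => if p s x y = 0 then 0 else
      p s x y * Real.logb 2 (p s x y / r s x y))
  have hcond2 : condMI (fun s x y => (M : ℝ)⁻¹ * ∑ w, PS s * ZT w s x * N x s y) =
      ∑ i : S × X × Y, (if pf i = 0 then 0 else pf i * Real.logb 2 (pf i / rf i)) :=
    hcond.trans hcond3.symm
  have hKL0 : 0 ≤ ∑ i : S × X × Y,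
      (if pf i = 0 then 0 else pf i * Real.logb 2 (pf i / rf i)) := by
    have := logSum pf rf hpf0 hrf0 hprf (by rw [hrfsum]; norm_num)
    rw [hpfsum, hrfsum] at this
    simpa using this
  rw [hcond2, ← hαeq]
  set α := ∑ i : S × X × Y, pf i * Tf i with hα
  set β := ∑ i : S × X × Y, rf i * Tf i with hβ
  have hα0 : 0 ≤ α := Finset.sum_nonneg fun i _ => mul_nonneg (hpf0 i) (hTf0 i)
  have hα1 : α ≤ 1 := by
    rw [hα, ← hpfsum]
    exact Finset.sum_le_sum fun i _ => by
      calc pf i * Tf i ≤ pf i * 1 := mul_le_mul_of_nonneg_left (hTf1 i) (hpf0 i)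
        _ = pf i := mul_one _
  have hβ0 : 0 ≤ β := Finset.sum_nonneg fun i _ => mul_nonneg (hrf0 i) (hTf0 i)
  have HbNN : 0 ≤ Hb α := by
    have l1 : Real.logb 2 α ≤ 0 := Real.logb_nonpos (by norm_num) hα0 hα1
    have l2 : Real.logb 2 (1 - α) ≤ 0 :=
      Real.logb_nonpos (by norm_num) (by linarith) (by linarith)
    have a1 : α * Real.logb 2 α ≤ 0 := mul_nonpos_of_nonneg_of_nonpos hα0 l1
    have a2 : (1 - α) * Real.logb 2 (1 - α) ≤ 0 :=
      mul_nonpos_of_nonneg_of_nonpos (by linarith) l2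
    unfold Hb
    linarith
  by_cases hM1 : M = 1
  · subst hM1
    have h0 : Real.logb 2 ((1:ℕ):ℝ) = 0 := by norm_num
    rw [h0, mul_zero]
    linarith
  · have hM2 : 2 ≤ M := by omega
    have hMRgt : (1:ℝ) < (M:ℝ) := by exact_mod_cast hM2.trans_lt' (by norm_num)
    have hMinv : (M:ℝ)⁻¹ < 1 := by
      rw [inv_lt_one_iff₀]
      right
      exact hMRgt
    have hβ1 : β < 1 := lt_of_le_of_lt hβle hMinv
    have hDP := binaryDP pf rf Tf hpf0 hrf0 hprf hTf0 hTf1 hpfsum hrfsum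
      (by rw [← hβ]; exact hβ1)
    rw [← hα, ← hβ] at hDP
    have t2 : (1 - α) * Real.logb 2 (1 - α) ≤
        (1 - α) * Real.logb 2 ((1 - α) / (1 - β)) := by
      rcases eq_or_lt_of_le hα1 with h1 | h1
      · rw [h1]; norm_num
      · have h1α : 0 < 1 - α := by linarith
        have h1β : 0 < 1 - β := by linarith
        have hd : Real.logb 2 ((1 - α) / (1 - β)) =
            Real.logb 2 (1 - α) - Real.logb 2 (1 - β) :=
          Real.logb_div (ne_of_gt h1α) (ne_of_gt h1β)
        have l2 : Real.logb 2 (1 - β) ≤ 0 :=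
          Real.logb_nonpos (by norm_num) (by linarith) (by linarith)
        rw [hd]
        have h' : Real.logb 2 (1 - α) ≤
            Real.logb 2 (1 - α) - Real.logb 2 (1 - β) := by linarith
        exact mul_le_mul_of_nonneg_left h' (le_of_lt h1α)
    have t1 : α * Real.logb 2 (M:ℝ) + α * Real.logb 2 α ≤
        α * Real.logb 2 (α / β) := by
      rcases eq_or_lt_of_le hα0 with h0 | h0
      · rw [← h0]; norm_num
      · have hβpos : 0 < β := by
          rcases eq_or_lt_of_le hβ0 with hb | hb
          · exfalso
            have hs0 : ∑ i : S × X × Y, rf i * Tf i = 0 := by rw [← hβ]; exact hb.symm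
            have hz : ∀ i, rf i * Tf i = 0 := fun i =>
              (Finset.sum_eq_zero_iff_of_nonneg
                (fun j _ => mul_nonneg (hrf0 j) (hTf0 j))).mp hs0 i (Finset.mem_univ i)
            have hzp : ∀ i, pf i * Tf i = 0 := by
              intro i
              rcases mul_eq_zero.mp (hz i) with h | h
              · rw [hprf i h, zero_mul]
              · rw [h, mul_zero]
            have : α = 0 := by rw [hα]; exact Finset.sum_eq_zero fun i _ => hzp i
            linarith
          · exact hb
        have hlogβ : Real.logb 2 β ≤ Real.logb 2 ((M:ℝ))⁻¹ :=
          Real.logb_le_logb_of_le (by norm_num) hβpos hβle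
        have hloginv : Real.logb 2 ((M:ℝ))⁻¹ = - Real.logb 2 (M:ℝ) := by
          simp [Real.logb, Real.log_inv, neg_div]
        have hdiv : Real.logb 2 (α / β) = Real.logb 2 α - Real.logb 2 β :=
          Real.logb_div (ne_of_gt h0) (ne_of_gt hβpos)
        rw [hdiv, mul_sub]
        have hkey : Real.logb 2 (M:ℝ) ≤ - Real.logb 2 β := by
          rw [hloginv] at hlogβ; linarith
        have h' := mul_le_mul_of_nonneg_left hkey (le_of_lt h0)
        rw [mul_neg] at h'
        linarith
    have final : α * Real.logb 2 (M:ℝ) - Hb α ≤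
        α * Real.logb 2 (α / β) + (1 - α) * Real.logb 2 ((1 - α) / (1 - β)) := by
      unfold Hb
      linarith
    linarith
end
end

section
/- Let (N, P_S) be a channel with state on finite alphabets X, Y, S, let N̄ be its CSIR-augmented channel, and let Z be an NS-assisted coding scheme with message set {1,...,M} for N̄. Define the twirl Z'(x, ŵ | (w,s), (y,s_R)) = (1/M) Σ_{π ∈ C_M} Z(x, π(ŵ) | (π(w), s), (y, s_R)) over cyclic permutations C_M of {1,...,M}, and define Z''(x, ŵ | (w,s), y) := Z'(x, ŵ | (w,s), (y,s)). Then Z'' is a bipartite non-signaling box (transmitter input {1,...,M} × S, output X; receiver input Y, output {1,...,M}) — in particular Σ_x Z''(x,ŵ|(w,s),y) = 1/M for all arguments and Σ_ŵ Z''(x,ŵ|(w,s),y) depends only on (x,s) — and its success probability over N equals that of Z over N̄: η_N(Z'') = η_{N̄}(Z). -/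
open scoped BigOperators Classical
open Finset Filter

noncomputable section

/-- The cyclic twirl of a box `Z`: `Z'(x, ŵ | (w,s), r) = (1/M) Σ_{π ∈ C_M}
Z(x, π(ŵ) | (π(w), s), r)`, where the cyclic group `C_M` acts on `Fin M` by `+ c`. -/
def twirl {S R X : Type*} [Fintype X] (M : ℕ)
    (Z : (Fin M × S) → R → X → Fin M → ℝ) : (Fin M × S) → R → X → Fin M → ℝ :=
  fun ws r x wh => (M : ℝ)⁻¹ * ∑ c : Fin M, Z (ws.1 + c, ws.2) r x (wh + c)

/-- The scheme `Z''(x, ŵ | (w,s), y) := Z'(x, ŵ | (w,s), (y,s))` obtained from the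
twirl `Z'` of `Z` by feeding the transmitter's state into the receiver slot. -/
def collapse {X S Y : Type*} [Fintype X] (M : ℕ)
    (Z : (Fin M × S) → (Y × S) → X → Fin M → ℝ) : (Fin M × S) → Y → X → Fin M → ℝ :=
  fun ws y x wh => twirl M Z ws (y, ws.2) x wh

section AuxStmt14
variable {X S Y : Type*} [Fintype X] [Fintype S] [Fintype Y]
variable {M : ℕ} {Z : (Fin M × S) → (Y × S) → X → Fin M → ℝ}

set_option linter.unusedSectionVars false in
lemma collapse_apply (ws : Fin M × S) (y : Y) (x : X) (wh : Fin M) :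
    collapse M Z ws y x wh
      = (M : ℝ)⁻¹ * ∑ c : Fin M, Z (ws.1 + c, ws.2) (y, ws.2) x (wh + c) := rfl

set_option linter.unusedSectionVars false in
lemma sumx_collapse (hZ : IsNSBox Z) (w : Fin M) (s : S) (y : Y) (wh : Fin M) :
    ∑ x, collapse M Z (w, s) y x wh = (M : ℝ)⁻¹ := by
  haveI : NeZero M := ⟨wh.pos.ne'⟩
  obtain ⟨hpos, hnorm, hns2, hns1⟩ := hZ
  simp only [collapse_apply]
  rw [← Finset.mul_sum, Finset.sum_comm]
  rw [Finset.sum_congr rfl fun c _ =>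
    hns1 ((w, s).1 + c, (w, s).2) (w, s) (y, (w, s).2) (wh + c)]
  have h2 : (∑ c : Fin M, ∑ x, Z (w, s) (y, (w, s).2) x (wh + c))
      = ∑ v : Fin M, ∑ x, Z (w, s) (y, (w, s).2) x v :=
    Fintype.sum_equiv (Equiv.addLeft wh) _ _ (fun c => rfl)
  rw [h2, Finset.sum_comm, hnorm]
  exact mul_one _

set_option linter.unusedSectionVars false in
lemma sumwh_collapse (w : Fin M) (s : S) (y : Y) (x : X) :
    ∑ wh, collapse M Z (w, s) y x wh
      = (M : ℝ)⁻¹ * ∑ w' : Fin M, ∑ wh, Z (w', s) (y, s) x wh := by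
  haveI : NeZero M := ⟨w.pos.ne'⟩
  simp only [collapse_apply]
  rw [← Finset.mul_sum, Finset.sum_comm]
  congr 1
  have h1 : ∀ c : Fin M, (∑ wh, Z ((w, s).1 + c, (w, s).2) (y, (w, s).2) x (wh + c))
      = ∑ wh, Z (w + c, s) (y, s) x wh :=
    fun c => Fintype.sum_equiv (Equiv.addRight c) _ _ (fun wh => rfl)
  rw [Finset.sum_congr rfl fun c _ => h1 c]
  exact Fintype.sum_equiv (Equiv.addLeft w) _ _ (fun c => rfl)

set_option linter.unusedSectionVars false in
lemma sumwh_collapse_eq (hZ : IsNSBox Z) (w w' : Fin M) (s : S) (y y' : Y) (x : X) :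
    ∑ wh, collapse M Z (w, s) y x wh = ∑ wh, collapse M Z (w', s) y' x wh := by
  rw [sumwh_collapse, sumwh_collapse]
  congr 1
  exact Finset.sum_congr rfl fun v _ => hZ.2.2.1 (v, s) (y, s) (y', s) x

end AuxStmt14

/-- from any NS-assisted scheme `Z` for the CSIR-augmented channel
`N̄`, the scheme `Z''(x,ŵ|(w,s),y) = Z'(x,ŵ|(w,s),(y,s))` (with `Z'` the cyclic twirl
of `Z`) is a valid NS-assisted scheme for `N` — in particular `Σ_x Z'' = 1/M` and
`Σ_ŵ Z''` depends only on `(x,s)` — and achieves over `N` the same success probability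
that `Z` achieves over `N̄`. -/
theorem stmt14 {X S Y : Type*} [Fintype X] [Fintype S] [Fintype Y]
    (N : X → S → Y → ℝ) (hN : IsStateKernel N) (PS : S → ℝ) (hPS : IsPMF PS)
    (M : ℕ) (Z : (Fin M × S) → (Y × S) → X → Fin M → ℝ) (hZ : IsNSBox Z) :
    IsNSBox (collapse M Z) ∧
    (∀ (w : Fin M) (s : S) (y : Y) (wh : Fin M),
      ∑ x, collapse M Z (w, s) y x wh = (M : ℝ)⁻¹) ∧
    (∀ (w w' : Fin M) (s : S) (y y' : Y) (x : X),
      ∑ wh, collapse M Z (w, s) y x wh = ∑ wh, collapse M Z (w', s) y' x wh) ∧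
    etaCWS M N PS (collapse M Z) = etaCWS M (Nbar N) PS Z := by
  refine ⟨⟨?_, ?_, ?_, ?_⟩, fun w s y wh => sumx_collapse hZ w s y wh,
    fun w w' s y y' x => sumwh_collapse_eq hZ w w' s y y' x, ?_⟩
  · -- nonnegativity
    intro a1 a2 b1 b2
    rw [collapse_apply]
    exact mul_nonneg (by positivity) (Finset.sum_nonneg fun c _ => hZ.1 _ _ _ _)
  · -- normalization
    rintro ⟨w, s⟩ y
    have hMne : (M : ℝ) ≠ 0 := Nat.cast_ne_zero.mpr w.pos.ne'
    rw [Finset.sum_comm]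
    rw [Finset.sum_congr rfl fun wh _ => sumx_collapse hZ w s y wh]
    rw [Finset.sum_const, Finset.card_univ, Fintype.card_fin, nsmul_eq_mul,
      mul_inv_cancel₀ hMne]
  · -- no signaling from receiver to transmitter
    rintro ⟨w, s⟩ y y' x
    exact sumwh_collapse_eq hZ w w s y y' x
  · -- no signaling from transmitter to receiver
    rintro ⟨w, s⟩ ⟨w', s'⟩ y wh
    rw [sumx_collapse hZ w s y wh, sumx_collapse hZ w' s' y wh]
  · -- success probabilities agree
    rcases Nat.eq_zero_or_pos M with hM | hM
    · subst hM; simp [etaCWS]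
    have hMne : (M : ℝ) ≠ 0 := Nat.cast_ne_zero.mpr hM.ne'
    unfold etaCWS
    congr 1
    have hR : ∀ (w : Fin M) (s : S) (x : X),
        (∑ p : Y × S, PS s * Nbar N x s p * Z (w, s) p x w)
          = ∑ y, PS s * N x s y * Z (w, s) (y, s) x w := by
      intro w s x
      rw [Fintype.sum_prod_type]
      refine Finset.sum_congr rfl fun y _ => ?_
      simp [Nbar, mul_ite, ite_mul, Finset.sum_ite_eq']
    have hRR : (∑ w, ∑ s, ∑ x, ∑ p : Y × S, PS s * Nbar N x s p * Z (w, s) p x w)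
        = ∑ w, ∑ s, ∑ x, ∑ y, PS s * N x s y * Z (w, s) (y, s) x w :=
      Finset.sum_congr rfl fun w _ => Finset.sum_congr rfl fun s _ =>
        Finset.sum_congr rfl fun x _ => hR w s x
    rw [hRR]
    have hswap : ∀ (f : Fin M → S → X → Y → ℝ),
        (∑ w, ∑ s, ∑ x, ∑ y, f w s x y) = ∑ s, ∑ x, ∑ y, ∑ w, f w s x y := by
      intro f
      rw [Finset.sum_comm]
      refine Finset.sum_congr rfl fun s _ => ?_
      rw [Finset.sum_comm]
      exact Finset.sum_congr rfl fun x _ => Finset.sum_comm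
    rw [hswap, hswap]
    refine Finset.sum_congr rfl fun s _ => Finset.sum_congr rfl fun x _ =>
      Finset.sum_congr rfl fun y _ => ?_
    rw [← Finset.mul_sum, ← Finset.mul_sum]
    congr 1
    have h1 : ∀ w : Fin M, collapse M Z (w, s) y x w
        = (M : ℝ)⁻¹ * ∑ v, Z (v, s) (y, s) x v := by
      intro w
      haveI : NeZero M := ⟨hM.ne'⟩
      rw [collapse_apply]
      congr 1
      exact Fintype.sum_equiv (Equiv.addLeft w) _ _ (fun c => rfl)
    simp only [h1, Finset.sum_const, Finset.card_univ, Fintype.card_fin, nsmul_eq_mul]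
    rw [← mul_assoc, mul_inv_cancel₀ hMne, one_mul]
end
end

section
/- Let Z(x, ŵ | (w,s), y) be a bipartite non-signaling box with transmitter input alphabet {1,...,M} × S and output alphabet X, and receiver input alphabet Y and output alphabet {1,...,M}. Then for every state s ∈ S and every probability mass function Q on Y (the 'broken channel'), the probability of correct decoding equals exactly 1/M: (1/M) Σ_{w∈{1,...,M}} Σ_{x∈X} Σ_{y∈Y} Q(y) · Z(x, w | (w,s), y) = 1/M. -/
open scoped BigOperators Classical
open Finset Filter

noncomputable section

/-- broken channel: for a bipartite non-signaling coding box, if the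
channel is replaced by an arbitrary output distribution `Q` (independent of the input),
then for every state `s` the probability of correct decoding is exactly `1/M`. -/
theorem stmt15 {X Y S : Type*} [Fintype X] [Fintype Y] [Fintype S] (M : ℕ)
    (Z : (Fin M × S) → Y → X → Fin M → ℝ) (hZ : IsNSBox Z)
    (s : S) (Q : Y → ℝ) (hQ : IsPMF Q) :
    (M : ℝ)⁻¹ * ∑ w, ∑ x, ∑ y, Q y * Z (w, s) y x w = (M : ℝ)⁻¹ := by
  rcases Nat.eq_zero_or_pos M with hM | hM
  · subst hM; simp
  · set w0 : Fin M := ⟨0, hM⟩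
    have key : ∑ w, ∑ x, ∑ y, Q y * Z (w, s) y x w = 1 := by
      have h1 : ∀ w : Fin M, ∑ x, ∑ y, Q y * Z (w, s) y x w
          = ∑ y, Q y * ∑ x, Z (w0, s) y x w := by
        intro w
        rw [Finset.sum_comm]
        refine Finset.sum_congr rfl fun y _ => ?_
        rw [← Finset.mul_sum, hZ.2.2.2 (w, s) (w0, s) y w]
      calc ∑ w, ∑ x, ∑ y, Q y * Z (w, s) y x w
          = ∑ w, ∑ y, Q y * ∑ x, Z (w0, s) y x w := by
            exact Finset.sum_congr rfl fun w _ => h1 w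
        _ = ∑ y, Q y * ∑ w, ∑ x, Z (w0, s) y x w := by
            rw [Finset.sum_comm]; simp [Finset.mul_sum]
        _ = ∑ y, Q y * 1 := by
            refine Finset.sum_congr rfl fun y _ => ?_
            rw [Finset.sum_comm, hZ.2.1 (w0, s) y]
        _ = 1 := by simp [hQ.2]
    rw [key, mul_one]
end
end

section
/- Let Z(x, ŵ1, ŵ2 | (w1,w2), y1, y2) be a tripartite non-signaling box where the transmitter has input (w1,w2) ∈ {1,...,M1} × {1,...,M2} and output x ∈ X, and user k ∈ {1,2} has input y_k ∈ Y_k and output ŵ_k ∈ {1,...,M_k}. Then for every w2 ∈ {1,...,M2} and every probability mass function Q on Y1 × Y2 (the 'broken channel'), the probability of user 1 decoding correctly equals exactly 1/M1: (1/M1) Σ_{w1,ŵ2,y1,y2} Q(y1,y2) · [Σ_x Z(x, w1, ŵ2 | (w1,w2), y1, y2)] = 1/M1. -/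
open scoped BigOperators Classical
open Finset Filter

noncomputable section

/-- Tripartite non-signaling box: party `i` has input `a_i` and output `b_i`; for every
subset `T` of the parties, the marginal over the outputs of the parties not in `T`
depends only on the inputs of the parties in `T`. -/
def IsNSBox3 {A0 A1 A2 B0 B1 B2 : Type*} [Fintype B0] [Fintype B1] [Fintype B2]
    (Z : A0 → A1 → A2 → B0 → B1 → B2 → ℝ) : Prop :=
  (∀ a0 a1 a2 b0 b1 b2, 0 ≤ Z a0 a1 a2 b0 b1 b2) ∧
  (∀ a0 a1 a2, ∑ b0, ∑ b1, ∑ b2, Z a0 a1 a2 b0 b1 b2 = 1) ∧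
  (∀ a0 a0' a1 a2 b1 b2, ∑ b0, Z a0 a1 a2 b0 b1 b2 = ∑ b0, Z a0' a1 a2 b0 b1 b2) ∧
  (∀ a0 a1 a1' a2 b0 b2, ∑ b1, Z a0 a1 a2 b0 b1 b2 = ∑ b1, Z a0 a1' a2 b0 b1 b2) ∧
  (∀ a0 a1 a2 a2' b0 b1, ∑ b2, Z a0 a1 a2 b0 b1 b2 = ∑ b2, Z a0 a1 a2' b0 b1 b2) ∧
  (∀ a0 a0' a1 a1' a2 b2,
    ∑ b0, ∑ b1, Z a0 a1 a2 b0 b1 b2 = ∑ b0, ∑ b1, Z a0' a1' a2 b0 b1 b2) ∧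
  (∀ a0 a0' a1 a2 a2' b1,
    ∑ b0, ∑ b2, Z a0 a1 a2 b0 b1 b2 = ∑ b0, ∑ b2, Z a0' a1 a2' b0 b1 b2) ∧
  (∀ a0 a1 a1' a2 a2' b0,
    ∑ b1, ∑ b2, Z a0 a1 a2 b0 b1 b2 = ∑ b1, ∑ b2, Z a0 a1' a2' b0 b1 b2)

lemma swap3_right {α β γ : Type*} [Fintype α] [Fintype β] [Fintype γ]
    (g : α → β → γ → ℝ) :
    ∑ a, ∑ b, ∑ c, g a b c = ∑ c, ∑ a, ∑ b, g a b c := by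
  calc ∑ a, ∑ b, ∑ c, g a b c
      = ∑ a, ∑ c, ∑ b, g a b c :=
        Finset.sum_congr rfl fun a _ => Finset.sum_comm
    _ = ∑ c, ∑ a, ∑ b, g a b c := Finset.sum_comm

lemma swap4 {α β γ δ : Type*} [Fintype α] [Fintype β] [Fintype γ] [Fintype δ]
    (g : α → β → γ → δ → ℝ) :
    ∑ a, ∑ b, ∑ c, ∑ d, g a b c d = ∑ c, ∑ d, ∑ a, ∑ b, g a b c d := by
  calc ∑ a, ∑ b, ∑ c, ∑ d, g a b c d
      = ∑ c, ∑ a, ∑ b, ∑ d, g a b c d := swap3_right _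
    _ = ∑ c, ∑ d, ∑ a, ∑ b, g a b c d :=
        Finset.sum_congr rfl fun c _ => swap3_right _

/-- broken channel, broadcast version: for a tripartite non-signaling
coding box, if the channel is replaced by an arbitrary output distribution `Q` on
`Y1 × Y2`, then for every `w2` the probability of user 1 decoding correctly is `1/M1`. -/
theorem stmt16 {X Y1 Y2 : Type*} [Fintype X] [Fintype Y1] [Fintype Y2] (M1 M2 : ℕ)
    (Z : (Fin M1 × Fin M2) → Y1 → Y2 → X → Fin M1 → Fin M2 → ℝ) (hZ : IsNSBox3 Z)
    (w2 : Fin M2) (Q : Y1 × Y2 → ℝ) (hQ : IsPMF Q) :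
    (M1 : ℝ)⁻¹ * ∑ w1, ∑ wh2, ∑ y1, ∑ y2,
        Q (y1, y2) * ∑ x, Z (w1, w2) y1 y2 x w1 wh2 = (M1 : ℝ)⁻¹ := by
  obtain ⟨hpos, hnorm, hns0, hns1, hns2, hns01, hns02, hns12⟩ := hZ
  rcases Nat.eq_zero_or_pos M1 with h0 | h0
  · subst h0; simp
  set w0 : Fin M1 × Fin M2 := (⟨0, h0⟩, w2) with hw0
  have key : ∀ (w1 : Fin M1) y1 y2 (wh1 : Fin M1) (wh2 : Fin M2),
      ∑ x, Z (w1, w2) y1 y2 x wh1 wh2 = ∑ x, Z w0 y1 y2 x wh1 wh2 :=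
    fun w1 y1 y2 wh1 wh2 => hns0 _ _ _ _ _ _
  have hsum : (∑ w1, ∑ wh2, ∑ y1, ∑ y2,
      Q (y1, y2) * ∑ x, Z (w1, w2) y1 y2 x w1 wh2) = 1 := by
    calc (∑ w1, ∑ wh2, ∑ y1, ∑ y2, Q (y1, y2) * ∑ x, Z (w1, w2) y1 y2 x w1 wh2)
        = ∑ w1, ∑ wh2, ∑ y1, ∑ y2, Q (y1, y2) * ∑ x, Z w0 y1 y2 x w1 wh2 := by
          refine Finset.sum_congr rfl fun w1 _ => Finset.sum_congr rfl fun wh2 _ =>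
            Finset.sum_congr rfl fun y1 _ => Finset.sum_congr rfl fun y2 _ => ?_
          rw [key]
      _ = ∑ y1, ∑ y2, ∑ w1, ∑ wh2, Q (y1, y2) * ∑ x, Z w0 y1 y2 x w1 wh2 :=
        swap4 _
      _ = ∑ y1, ∑ y2, Q (y1, y2) := by
          refine Finset.sum_congr rfl fun y1 _ => Finset.sum_congr rfl fun y2 _ => ?_
          have h1 : (∑ w1 : Fin M1, ∑ wh2 : Fin M2, ∑ x, Z w0 y1 y2 x w1 wh2) = 1 := by
            rw [swap3_right (fun w1 wh2 x => Z w0 y1 y2 x w1 wh2)]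
            exact hnorm w0 y1 y2
          simp_rw [← Finset.mul_sum]
          rw [h1, mul_one]
      _ = 1 := by
          have := hQ.2
          rw [← this, ← Finset.sum_product']
          rfl
  rw [hsum, mul_one]
end
end

section
/- Let (N, P_S) be a channel with state on finite alphabets X, Y, S, let n ∈ ℕ, and let P(x^n | s^n) be any conditional pmf on X^n given S^n. Form the joint pmf p(s^n, x^n, y^n) = (Π_{i=1}^n P_S(s_i)) · P(x^n|s^n) · (Π_{i=1}^n N(y_i|x_i,s_i)). Then I(X^n;Y^n|S^n) ≤ Σ_{i=1}^n I(X_i;Y_i|S_i), where each I(X_i;Y_i|S_i) is computed from the marginal of (S_i, X_i, Y_i); in particular, I(X^n;Y^n|S^n) ≤ n · sup over conditional pmfs P_{X|S} of I(X;Y|S) computed from P_S(s)P_{X|S}(x|s)N(y|x,s). -/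
open scoped BigOperators Classical
open Finset Filter

noncomputable section

namespace SL17



lemma sum_pi_prod {ι κ : Type*} [Fintype ι] [DecidableEq ι] [Fintype κ] (f : ι → κ → ℝ) :
    ∑ x : ι → κ, ∏ i, f i (x i) = ∏ i, ∑ b, f i b :=
  (Fintype.prod_sum f).symm



lemma sum_fix_one {ι κ : Type*} [Fintype ι] [DecidableEq ι] [Fintype κ] (f : ι → κ → ℝ)
    (h1 : ∀ j, ∑ b, f j b = 1) (i : ι) (a : κ) :
    ∑ x : ι → κ, (if x i = a then ∏ j, f j (x j) else 0) = f i a := by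
  classical
  have key : ∀ x : ι → κ, (if x i = a then ∏ j, f j (x j) else 0)
      = ∏ j, (if j = i then (if x j = a then f j (x j) else 0) else f j (x j)) := by
    intro x
    by_cases hx : x i = a
    · simp only [hx, if_true]
      refine Finset.prod_congr rfl ?_
      intro j _
      by_cases hj : j = i
      · subst hj; simp [hx]
      · simp [hj]
    · simp only [hx, if_false]
      refine (Finset.prod_eq_zero (Finset.mem_univ i) ?_).symm
      simp [hx]
  rw [Finset.sum_congr rfl (fun x _ => key x)]
  rw [sum_pi_prod (fun j b => if j = i then (if b = a then f j b else 0) else f j b)]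
  have : ∀ j, (∑ b, (if j = i then (if b = a then f j b else 0) else f j b))
      = if j = i then f i a else 1 := by
    intro j
    by_cases hj : j = i
    · subst hj; simp
    · simp [hj, h1 j]
  rw [Finset.prod_congr rfl (fun j _ => this j)]
  simp



lemma sum_ite_and {κ : Type*} [Fintype κ] (A : Prop) [Decidable A] (c : κ) (t : ℝ) :
    ∑ a : κ, (if A ∧ c = a then t else 0) = if A then t else 0 := by
  by_cases hA : A <;> simp [hA, Finset.sum_ite_eq]

lemma triple_single_le {A B C : Type*} [Fintype A] [Fintype B] [Fintype C]
    (f : A → B → C → ℝ) (h : ∀ a b c, 0 ≤ f a b c) (a : A) (b : B) (c : C) :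
    f a b c ≤ ∑ a', ∑ b', ∑ c', f a' b' c' := by
  calc f a b c ≤ ∑ c', f a b c' :=
        Finset.single_le_sum (fun c' _ => h a b c') (Finset.mem_univ c)
    _ ≤ ∑ b', ∑ c', f a b' c' :=
        Finset.single_le_sum (fun b' _ => Finset.sum_nonneg fun c' _ => h a b' c')
          (Finset.mem_univ b)
    _ ≤ ∑ a', ∑ b', ∑ c', f a' b' c' :=
        Finset.single_le_sum
          (fun a' _ => Finset.sum_nonneg fun b' _ => Finset.sum_nonneg fun c' _ => h a' b' c')
          (Finset.mem_univ a)




lemma sum_swap_33 {A B C D E G : Type*} [Fintype A] [Fintype B] [Fintype C]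
    [Fintype D] [Fintype E] [Fintype G] (H : A → B → C → D → E → G → ℝ) :
    ∑ a, ∑ b, ∑ c, ∑ d, ∑ e, ∑ g, H a b c d e g
      = ∑ d, ∑ e, ∑ g, ∑ a, ∑ b, ∑ c, H a b c d e g := by
  have h1 : ∑ p : (A × B × C) × (D × E × G),
      H p.1.1 p.1.2.1 p.1.2.2 p.2.1 p.2.2.1 p.2.2.2
      = ∑ a, ∑ b, ∑ c, ∑ d, ∑ e, ∑ g, H a b c d e g := by
    simp only [Fintype.sum_prod_type]
  have h2 : ∑ p : (D × E × G) × (A × B × C),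
      H p.2.1 p.2.2.1 p.2.2.2 p.1.1 p.1.2.1 p.1.2.2
      = ∑ d, ∑ e, ∑ g, ∑ a, ∑ b, ∑ c, H a b c d e g := by
    simp only [Fintype.sum_prod_type]
  rw [← h1, ← h2]
  exact Fintype.sum_equiv (Equiv.prodComm _ _) _ _ (fun p => rfl)

lemma collapse3 {A B C : Type*} [Fintype A] [Fintype B] [Fintype C]
    (a : A) (b : B) (c : C) (F : A → B → C → ℝ) :
    (∑ a', ∑ b', ∑ c', if a = a' ∧ b = b' ∧ c = c' then F a' b' c' else 0) = F a b c := by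
  have h1 : ∀ a' b', (∑ c', if a = a' ∧ b = b' ∧ c = c' then F a' b' c' else 0)
      = if a = a' ∧ b = b' then F a' b' c else 0 := by
    intro a' b'
    by_cases h : a = a' ∧ b = b'
    · simp [h, Finset.sum_ite_eq]
    · rw [if_neg h]
      exact Finset.sum_eq_zero fun c' _ => if_neg (by tauto)
  simp only [h1]
  have h2 : ∀ a', (∑ b', if a = a' ∧ b = b' then F a' b' c else 0)
      = if a = a' then F a' b c else 0 := by
    intro a'
    by_cases h : a = a' <;> simp [h, Finset.sum_ite_eq]
  simp only [h2, Finset.sum_ite_eq, Finset.mem_univ, if_true]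

lemma gibbs {ι : Type*} [Fintype ι] (a b : ι → ℝ) (ha : ∀ i, 0 ≤ a i) (hb : ∀ i, 0 ≤ b i)
    (hab : ∀ i, a i ≠ 0 → 0 < b i) (hA : ∑ i, a i = 1) (hB : ∑ i, b i ≤ 1) :
    0 ≤ ∑ i, a i * Real.logb 2 (a i / b i) := by
  have hlog2 : (0:ℝ) < Real.log 2 := Real.log_pos one_lt_two
  have key : ∀ i, (a i - (if a i = 0 then 0 else b i)) / Real.log 2
      ≤ a i * Real.logb 2 (a i / b i) := by
    intro i
    by_cases h : a i = 0
    · simp [h]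
    · have hai : 0 < a i := lt_of_le_of_ne (ha i) (Ne.symm h)
      have hbi : 0 < b i := hab i h
      simp only [h, if_false]
      have h1 : Real.log (b i / a i) ≤ b i / a i - 1 :=
        Real.log_le_sub_one_of_pos (by positivity)
      have h2 : a i * Real.log (b i / a i) ≤ a i * (b i / a i - 1) :=
        mul_le_mul_of_nonneg_left h1 hai.le
      have h3 : a i * (b i / a i - 1) = b i - a i := by field_simp
      have h4 : Real.log (a i / b i) = - Real.log (b i / a i) := by
        rw [← Real.log_inv, inv_div]
      have h5 : a i - b i ≤ a i * Real.log (a i / b i) := by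
        rw [h4]; nlinarith
      rw [Real.logb, ← mul_div_assoc]
      gcongr
  calc (0:ℝ) ≤ (∑ i, a i - ∑ i, (if a i = 0 then 0 else b i)) / Real.log 2 := by
        apply div_nonneg _ hlog2.le
        have hb' : ∑ i, (if a i = 0 then 0 else b i) ≤ ∑ i, b i :=
          Finset.sum_le_sum fun i _ => by by_cases h : a i = 0 <;> simp [h, hb i]
        linarith
    _ = ∑ i, (a i - (if a i = 0 then 0 else b i)) / Real.log 2 := by
        rw [← Finset.sum_sub_distrib, ← Finset.sum_div]
    _ ≤ ∑ i, a i * Real.logb 2 (a i / b i) := Finset.sum_le_sum fun i _ => key i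




lemma condMI_le_bound {S X Y : Type*} [Fintype S] [Fintype X] [Fintype Y]
    (p : S → X → Y → ℝ) (hp : ∀ s x y, 0 ≤ p s x y)
    (htot : ∑ s, ∑ x, ∑ y, p s x y = 1) :
    condMI p ≤ (Fintype.card S * Fintype.card X * Fintype.card Y : ℝ) / Real.log 2 := by
  have hlog2 : (0:ℝ) < Real.log 2 := Real.log_pos one_lt_two
  have hterm : ∀ s x y, (if p s x y = 0 then 0 else
      p s x y * Real.logb 2 (((∑ x', ∑ y', p s x' y') * p s x y) /
        ((∑ y', p s x y') * (∑ x', p s x' y)))) ≤ 1 / Real.log 2 := by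
    intro s x y
    by_cases h : p s x y = 0
    · rw [if_pos h]
      positivity
    · rw [if_neg h]
      have hp0 : 0 < p s x y := lt_of_le_of_ne (hp s x y) (Ne.symm h)
      have hSX : p s x y ≤ ∑ y', p s x y' :=
        Finset.single_le_sum (fun y' _ => hp s x y') (Finset.mem_univ y)
      have hSY : p s x y ≤ ∑ x', p s x' y :=
        Finset.single_le_sum (fun x' _ => hp s x' y) (Finset.mem_univ x)
      have hS1 : (∑ x', ∑ y', p s x' y') ≤ 1 := by
        rw [← htot]
        exact Finset.single_le_sum
          (fun s' _ => Finset.sum_nonneg fun x' _ => Finset.sum_nonneg fun y' _ => hp s' x' y')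
          (Finset.mem_univ s)
      have hSpos : 0 < ∑ x', ∑ y', p s x' y' := by
        have : (∑ y', p s x y') ≤ ∑ x', ∑ y', p s x' y' :=
          Finset.single_le_sum (fun x' _ => Finset.sum_nonneg fun y' _ => hp s x' y')
            (Finset.mem_univ x)
        linarith
      have hSXpos : 0 < ∑ y', p s x y' := lt_of_lt_of_le hp0 hSX
      have hSYpos : 0 < ∑ x', p s x' y := lt_of_lt_of_le hp0 hSY
      have hratio : ((∑ x', ∑ y', p s x' y') * p s x y) /
          ((∑ y', p s x y') * (∑ x', p s x' y)) ≤ 1 / p s x y := by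
        rw [div_le_div_iff₀ (by positivity) hp0]
        nlinarith [mul_le_mul hSX hSY hp0.le hSXpos.le,
          mul_le_mul_of_nonneg_right hS1 (mul_pos hp0 hp0).le]
      have hrpos : 0 < ((∑ x', ∑ y', p s x' y') * p s x y) /
          ((∑ y', p s x y') * (∑ x', p s x' y)) := by positivity
      have hmono := Real.logb_le_logb_of_le (b := 2) one_lt_two hrpos hratio
      have step1 : p s x y * Real.logb 2 (((∑ x', ∑ y', p s x' y') * p s x y) /
            ((∑ y', p s x y') * (∑ x', p s x' y)))
          ≤ p s x y * Real.logb 2 (1 / p s x y) :=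
        mul_le_mul_of_nonneg_left hmono hp0.le
      have hlog : Real.log (1 / p s x y) ≤ 1 / p s x y - 1 :=
        Real.log_le_sub_one_of_pos (by positivity)
      have step2 : p s x y * Real.logb 2 (1 / p s x y) ≤ 1 / Real.log 2 := by
        rw [Real.logb, ← mul_div_assoc, div_le_div_iff₀ hlog2 hlog2]
        have h5 : p s x y * Real.log (1 / p s x y) ≤ 1 - p s x y := by
          have h5a := mul_le_mul_of_nonneg_left hlog hp0.le
          have heq : p s x y * (1 / p s x y - 1) = 1 - p s x y := by field_simp
          linarith
        have h6 : p s x y * Real.log (1 / p s x y) ≤ 1 := by linarith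
        nlinarith [mul_le_mul_of_nonneg_right h6 hlog2.le]
      linarith
  calc condMI p ≤ ∑ s : S, ∑ x : X, ∑ y : Y, 1 / Real.log 2 :=
        Finset.sum_le_sum fun s _ => Finset.sum_le_sum fun x _ =>
          Finset.sum_le_sum fun y _ => hterm s x y
    _ = (Fintype.card S * Fintype.card X * Fintype.card Y : ℝ) / Real.log 2 := by
        simp [Finset.sum_const, Finset.card_univ, mul_comm, mul_div_assoc]
        ring

variable {X S Y : Type*} [Fintype X] [Fintype S] [Fintype Y]

/-- joint pmf of the n-letter system -/
def jp (N : X → S → Y → ℝ) (PS : S → ℝ) {n : ℕ} (P : (Fin n → S) → (Fin n → X) → ℝ)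
    (s : Fin n → S) (x : Fin n → X) (y : Fin n → Y) : ℝ :=
  (∏ i, PS (s i)) * P s x * ∏ i, N (x i) (s i) (y i)

/-- i-th marginal on (S,X) weighted -/
def Am (PS : S → ℝ) {n : ℕ} (P : (Fin n → S) → (Fin n → X) → ℝ)
    (i : Fin n) (si : S) (xi : X) : ℝ :=
  ∑ s, ∑ x, if s i = si ∧ x i = xi then (∏ j, PS (s j)) * P s x else 0

/-- i-th marginal joint pmf of (S_i, X_i, Y_i) -/
def q (N : X → S → Y → ℝ) (PS : S → ℝ) {n : ℕ} (P : (Fin n → S) → (Fin n → X) → ℝ)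
    (i : Fin n) (si : S) (xi : X) (yi : Y) : ℝ :=
  ∑ s : Fin n → S, ∑ x : Fin n → X, ∑ y : Fin n → Y,
    if s i = si ∧ x i = xi ∧ y i = yi then
      (∏ j, PS (s j)) * P s x * ∏ j, N (x j) (s j) (y j)
    else 0

/-- (S_i,Y_i) marginal -/
def Bm (N : X → S → Y → ℝ) (PS : S → ℝ) {n : ℕ} (P : (Fin n → S) → (Fin n → X) → ℝ)
    (i : Fin n) (si : S) (yi : Y) : ℝ :=
  ∑ xi, Am PS P i si xi * N xi si yi

/-- conditional output distribution given the state sequence -/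
def gm (N : X → S → Y → ℝ) {n : ℕ} (P : (Fin n → S) → (Fin n → X) → ℝ)
    (s : Fin n → S) (y : Fin n → Y) : ℝ :=
  ∑ x, P s x * ∏ i, N (x i) (s i) (y i)

variable (N : X → S → Y → ℝ) (PS : S → ℝ) {n : ℕ} (P : (Fin n → S) → (Fin n → X) → ℝ)
variable (hN : IsStateKernel N) (hPS : IsPMF PS) (hP : ∀ s, IsPMF (P s))

section basic
include hPS in
lemma W_sum : ∑ s : Fin n → S, ∏ i, PS (s i) = 1 := by
  simpa [hPS.2] using sum_pi_prod (fun _ : Fin n => PS)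

include hPS in
lemma W_nonneg (s : Fin n → S) : 0 ≤ ∏ i, PS (s i) :=
  Finset.prod_nonneg fun i _ => hPS.1 _

include hN in
lemma Npr_sum (s : Fin n → S) (x : Fin n → X) :
    ∑ y : Fin n → Y, ∏ i, N (x i) (s i) (y i) = 1 := by
  simpa [hN.2] using sum_pi_prod (fun i b => N (x i) (s i) b)

include hN in
lemma Npr_nonneg (s : Fin n → S) (x : Fin n → X) (y : Fin n → Y) :
    0 ≤ ∏ i, N (x i) (s i) (y i) :=
  Finset.prod_nonneg fun i _ => hN.1 _ _ _

include hN hPS hP in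
lemma jp_nonneg (s x y) : 0 ≤ jp N PS P s x y :=
  mul_nonneg (mul_nonneg (W_nonneg PS hPS s) ((hP s).1 x)) (Npr_nonneg N hN s x y)

include hPS hP in
lemma Am_nonneg (i si xi) : 0 ≤ Am PS P i si xi := by
  refine Finset.sum_nonneg fun s _ => Finset.sum_nonneg fun x _ => ?_
  split
  · exact mul_nonneg (W_nonneg PS hPS s) ((hP s).1 x)
  · exact le_refl 0
end basic


include hN in
lemma q_eq (i : Fin n) (si : S) (xi : X) (yi : Y) :
    q N PS P i si xi yi = Am PS P i si xi * N xi si yi := by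
  unfold q Am
  rw [Finset.sum_mul]
  refine Finset.sum_congr rfl fun s _ => ?_
  rw [Finset.sum_mul]
  refine Finset.sum_congr rfl fun x _ => ?_
  by_cases h : s i = si ∧ x i = xi
  · simp only [h.1, h.2, true_and, if_true]
    have hs := sum_fix_one (fun j b => N (x j) (s j) b) (fun j => hN.2 _ _) i yi
    calc ∑ y : Fin n → Y,
          (if y i = yi then (∏ j, PS (s j)) * P s x * ∏ j, N (x j) (s j) (y j) else 0)
        = (∏ j, PS (s j)) * P s x *
            ∑ y : Fin n → Y, (if y i = yi then ∏ j, N (x j) (s j) (y j) else 0) := by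
          rw [Finset.mul_sum]
          exact Finset.sum_congr rfl fun y _ => by split <;> simp
      _ = (∏ j, PS (s j)) * P s x * N (x i) (s i) yi := by rw [hs]
      _ = _ := by rw [h.1, h.2]
  · have hz : ∀ y : Fin n → Y,
        (if s i = si ∧ x i = xi ∧ y i = yi then
          (∏ j, PS (s j)) * P s x * ∏ j, N (x j) (s j) (y j) else 0) = 0 := by
      intro y; rw [if_neg]; tauto
    rw [Finset.sum_eq_zero (fun y _ => hz y), if_neg h, zero_mul]

include hPS hP in
lemma Am_sum (i : Fin n) (si : S) : ∑ xi, Am PS P i si xi = PS si := by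
  unfold Am
  rw [Finset.sum_comm]
  have step : ∀ s : Fin n → S,
      (∑ xi, ∑ x, if s i = si ∧ x i = xi then (∏ j, PS (s j)) * P s x else 0)
        = if s i = si then ∏ j, PS (s j) else 0 := by
    intro s
    rw [Finset.sum_comm]
    have : ∀ x : Fin n → X,
        (∑ xi, if s i = si ∧ x i = xi then (∏ j, PS (s j)) * P s x else 0)
          = if s i = si then (∏ j, PS (s j)) * P s x else 0 :=
      fun x => sum_ite_and _ _ _
    rw [Finset.sum_congr rfl fun x _ => this x]
    by_cases h : s i = si
    · simp only [h, if_true, ← Finset.mul_sum, (hP s).2, mul_one]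
    · simp [h]
  rw [Finset.sum_congr rfl fun s _ => step s]
  exact sum_fix_one (fun _ => PS) (fun _ => hPS.2) i si

include hPS hP in
lemma Am_all (i : Fin n) : ∑ si, ∑ xi, Am PS P i si xi = 1 := by
  simp [Am_sum PS P hPS hP i, hPS.2]

include hPS hP in
lemma Bm_nonneg (hN : IsStateKernel N) (i : Fin n) (si : S) (yi : Y) :
    0 ≤ Bm N PS P i si yi :=
  Finset.sum_nonneg fun xi _ => mul_nonneg (Am_nonneg PS P hPS hP i si xi) (hN.1 _ _ _)

include hN hPS hP in
lemma Bm_all (i : Fin n) : ∑ si, ∑ yi, Bm N PS P i si yi = 1 := by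
  unfold Bm
  have : ∀ si : S, (∑ yi, ∑ xi, Am PS P i si xi * N xi si yi) = ∑ xi, Am PS P i si xi := by
    intro si
    rw [Finset.sum_comm]
    simp [← Finset.mul_sum, hN.2]
  rw [Finset.sum_congr rfl fun si _ => this si]
  exact Am_all PS P hPS hP i

include hN in
lemma q_sum_y (i : Fin n) (si : S) (xi : X) :
    ∑ yi, q N PS P i si xi yi = Am PS P i si xi := by
  simp [q_eq N PS P hN, ← Finset.mul_sum, hN.2]

include hN in
lemma q_sum_x (i : Fin n) (si : S) (yi : Y) :
    ∑ xi, q N PS P i si xi yi = Bm N PS P i si yi := by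
  simp [q_eq N PS P hN, Bm]

include hN hPS hP in
lemma q_sum_xy (i : Fin n) (si : S) :
    ∑ xi, ∑ yi, q N PS P i si xi yi = PS si := by
  have : ∀ xi, ∑ yi, q N PS P i si xi yi = Am PS P i si xi := q_sum_y N PS P hN i si
  rw [Finset.sum_congr rfl fun xi _ => this xi]
  exact Am_sum PS P hPS hP i si

include hN hPS hP in
lemma jp_le_q (i : Fin n) (s : Fin n → S) (x : Fin n → X) (y : Fin n → Y) :
    jp N PS P s x y ≤ q N PS P i (s i) (x i) (y i) := by
  unfold q
  have h0 : ∀ (s' : Fin n → S) (x' : Fin n → X) (y' : Fin n → Y), 0 ≤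
      (if s' i = s i ∧ x' i = x i ∧ y' i = y i then
        (∏ j, PS (s' j)) * P s' x' * ∏ j, N (x' j) (s' j) (y' j) else 0) := by
    intro s' x' y'; split
    · exact jp_nonneg N PS P hN hPS hP s' x' y'
    · exact le_refl 0
  have := triple_single_le _ h0 s x y
  simpa [jp] using this


-- conditional MI of the i-th marginal, simplified form
include hN hPS hP in
lemma condMI_q_step (i : Fin n) :
    condMI (q N PS P i) = ∑ si, ∑ xi, ∑ yi,
      (if q N PS P i si xi yi = 0 then 0 else q N PS P i si xi yi *
        Real.logb 2 (PS si * N xi si yi / Bm N PS P i si yi)) := by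
  unfold condMI
  refine Finset.sum_congr rfl fun si _ => Finset.sum_congr rfl fun xi _ =>
    Finset.sum_congr rfl fun yi _ => ?_
  rw [q_sum_xy N PS P hN hPS hP i si, q_sum_y N PS P hN i si xi, q_sum_x N PS P hN i si yi]
  by_cases h : q N PS P i si xi yi = 0
  · rw [if_pos h, if_pos h]
  · rw [if_neg h, if_neg h]
    have hq := q_eq N PS P hN i si xi yi
    have hAm : Am PS P i si xi ≠ 0 := fun h0 => h (by rw [hq, h0, zero_mul])
    have hr : PS si * q N PS P i si xi yi / (Am PS P i si xi * Bm N PS P i si yi)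
        = PS si * N xi si yi / Bm N PS P i si yi := by
      rw [hq, show PS si * (Am PS P i si xi * N xi si yi)
          = Am PS P i si xi * (PS si * N xi si yi) by ring,
        mul_div_mul_left _ _ hAm]
    rw [hr]

-- rewriting a q-weighted sum as a jp-weighted sum
lemma marg_weight (i : Fin n) (F : S → X → Y → ℝ) :
    (∑ si, ∑ xi, ∑ yi,
      (if q N PS P i si xi yi = 0 then 0 else q N PS P i si xi yi * F si xi yi))
    = ∑ s, ∑ x, ∑ y, jp N PS P s x y *
        (if q N PS P i (s i) (x i) (y i) = 0 then 0 else F (s i) (x i) (y i)) := by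
  have step1 : ∀ si xi yi,
      (if q N PS P i si xi yi = 0 then 0 else q N PS P i si xi yi * F si xi yi)
      = q N PS P i si xi yi * (if q N PS P i si xi yi = 0 then 0 else F si xi yi) := by
    intro si xi yi
    by_cases h : q N PS P i si xi yi = 0 <;> simp [h]
  simp only [step1]
  have step2 : ∀ si xi yi,
      q N PS P i si xi yi * (if q N PS P i si xi yi = 0 then 0 else F si xi yi)
      = ∑ s, ∑ x, ∑ y, (if s i = si ∧ x i = xi ∧ y i = yi then
          jp N PS P s x y * (if q N PS P i si xi yi = 0 then 0 else F si xi yi) else 0) := by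
    intro si xi yi
    rw [show (∑ s, ∑ x, ∑ y, (if s i = si ∧ x i = xi ∧ y i = yi then
          jp N PS P s x y * (if q N PS P i si xi yi = 0 then 0 else F si xi yi) else 0))
        = (∑ s, ∑ x, ∑ y, (if s i = si ∧ x i = xi ∧ y i = yi then
            jp N PS P s x y else 0)) * (if q N PS P i si xi yi = 0 then 0 else F si xi yi) by
      rw [Finset.sum_mul]
      refine Finset.sum_congr rfl fun s _ => ?_
      rw [Finset.sum_mul]
      refine Finset.sum_congr rfl fun x _ => ?_
      rw [Finset.sum_mul]
      refine Finset.sum_congr rfl fun y _ => ?_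
      split <;> simp]
    rfl
  simp only [step2]
  rw [sum_swap_33]
  refine Finset.sum_congr rfl fun s _ => Finset.sum_congr rfl fun x _ =>
    Finset.sum_congr rfl fun y _ => ?_
  have := collapse3 (s i) (x i) (y i) (fun si xi yi =>
    jp N PS P s x y * (if q N PS P i si xi yi = 0 then 0 else F si xi yi))
  simpa using this


include hN hP in
lemma jp_sum_y (s : Fin n → S) (x : Fin n → X) :
    ∑ y, jp N PS P s x y = (∏ i, PS (s i)) * P s x := by
  unfold jp
  rw [← Finset.mul_sum, Npr_sum N hN s x, mul_one]

include hN hP in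
lemma jp_sum_xy (s : Fin n → S) :
    ∑ x, ∑ y, jp N PS P s x y = ∏ i, PS (s i) := by
  simp only [jp_sum_y N PS P hN hP]
  rw [← Finset.mul_sum, (hP s).2, mul_one]

lemma jp_sum_x (s : Fin n → S) (y : Fin n → Y) :
    ∑ x, jp N PS P s x y = (∏ i, PS (s i)) * gm N P s y := by
  unfold jp gm
  rw [Finset.mul_sum]
  exact Finset.sum_congr rfl fun x _ => by ring

include hN hPS hP in
lemma condMI_jp : condMI (jp N PS P) = ∑ s, ∑ x, ∑ y,
    (if jp N PS P s x y = 0 then 0 else jp N PS P s x y *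
      Real.logb 2 ((∏ i, N (x i) (s i) (y i)) / gm N P s y)) := by
  unfold condMI
  refine Finset.sum_congr rfl fun s _ => Finset.sum_congr rfl fun x _ =>
    Finset.sum_congr rfl fun y _ => ?_
  rw [jp_sum_xy N PS P hN hP s, jp_sum_y N PS P hN hP s x, jp_sum_x N PS P s y]
  by_cases h : jp N PS P s x y = 0
  · rw [if_pos h, if_pos h]
  · rw [if_neg h, if_neg h]
    have hW : (∏ i, PS (s i)) ≠ 0 := by
      intro h0; exact h (by unfold jp; rw [h0, zero_mul, zero_mul])
    have hPsx : P s x ≠ 0 := by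
      intro h0; exact h (by unfold jp; rw [h0, mul_zero, zero_mul])
    have hr : (∏ i, PS (s i)) * jp N PS P s x y /
        ((∏ i, PS (s i)) * P s x * ((∏ i, PS (s i)) * gm N P s y))
        = (∏ i, N (x i) (s i) (y i)) / gm N P s y := by
      unfold jp
      rw [show (∏ i, PS (s i)) * ((∏ i, PS (s i)) * P s x * ∏ i, N (x i) (s i) (y i))
          = ((∏ i, PS (s i)) * P s x * (∏ i, PS (s i))) * ∏ i, N (x i) (s i) (y i) by ring,
        show (∏ i, PS (s i)) * P s x * ((∏ i, PS (s i)) * gm N P s y)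
          = ((∏ i, PS (s i)) * P s x * (∏ i, PS (s i))) * gm N P s y by ring,
        mul_div_mul_left _ _ (by exact mul_ne_zero (mul_ne_zero hW hPsx) hW)]
    rw [hr]

lemma sum_swap_13 {A D E G : Type*} [Fintype A] [Fintype D] [Fintype E] [Fintype G]
    (H : A → D → E → G → ℝ) :
    ∑ a, ∑ d, ∑ e, ∑ g, H a d e g = ∑ d, ∑ e, ∑ g, ∑ a, H a d e g := by
  have h1 : ∑ p : A × (D × E × G), H p.1 p.2.1 p.2.2.1 p.2.2.2
      = ∑ a, ∑ d, ∑ e, ∑ g, H a d e g := by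
    simp only [Fintype.sum_prod_type]
  have h2 : ∑ p : (D × E × G) × A, H p.2 p.1.1 p.1.2.1 p.1.2.2
      = ∑ d, ∑ e, ∑ g, ∑ a, H a d e g := by
    simp only [Fintype.sum_prod_type]
  rw [← h1, ← h2]
  exact Fintype.sum_equiv (Equiv.prodComm _ _) _ _ (fun p => rfl)

lemma gibbs2 {σ τ : Type*} [Fintype σ] [Fintype τ] (a b : σ → τ → ℝ)
    (ha : ∀ s t, 0 ≤ a s t) (hb : ∀ s t, 0 ≤ b s t)
    (hab : ∀ s t, a s t ≠ 0 → 0 < b s t)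
    (hA : ∑ s, ∑ t, a s t = 1) (hB : ∑ s, ∑ t, b s t ≤ 1) :
    0 ≤ ∑ s, ∑ t, a s t * Real.logb 2 (a s t / b s t) := by
  have := gibbs (fun p : σ × τ => a p.1 p.2) (fun p => b p.1 p.2)
    (fun p => ha p.1 p.2) (fun p => hb p.1 p.2) (fun p => hab p.1 p.2)
    (by simpa [Fintype.sum_prod_type] using hA) (by simpa [Fintype.sum_prod_type] using hB)
  simpa [Fintype.sum_prod_type] using this


include hN hPS hP in
lemma q_nonneg (i : Fin n) (si : S) (xi : X) (yi : Y) : 0 ≤ q N PS P i si xi yi := by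
  refine Finset.sum_nonneg fun s _ => Finset.sum_nonneg fun x _ =>
    Finset.sum_nonneg fun y _ => ?_
  split
  · exact jp_nonneg N PS P hN hPS hP s x y
  · exact le_refl 0

include hN hPS hP in
lemma part1 : condMI (jp N PS P) ≤ ∑ i, condMI (q N PS P i) := by
  have hq : ∀ i : Fin n, condMI (q N PS P i) = ∑ s, ∑ x, ∑ y, jp N PS P s x y *
      (if q N PS P i (s i) (x i) (y i) = 0 then 0
        else Real.logb 2 (PS (s i) * N (x i) (s i) (y i) / Bm N PS P i (s i) (y i))) :=
    fun i => by
      rw [condMI_q_step N PS P hN hPS hP i]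
      exact marg_weight N PS P i _
  rw [← sub_nonneg]
  have key : (∑ i, condMI (q N PS P i)) - condMI (jp N PS P)
      = ∑ s, ∑ y, (∑ x, jp N PS P s x y) *
          Real.logb 2 ((∑ x, jp N PS P s x y) / ∏ i, Bm N PS P i (s i) (y i)) := by
    simp only [hq, condMI_jp N PS P hN hPS hP]
    rw [sum_swap_13]
    rw [← Finset.sum_sub_distrib]
    refine Finset.sum_congr rfl fun s _ => ?_
    rw [← Finset.sum_sub_distrib]
    have inner : ∀ x : Fin n → X, (∑ y, ∑ i : Fin n, jp N PS P s x y *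
        (if q N PS P i (s i) (x i) (y i) = 0 then 0
          else Real.logb 2 (PS (s i) * N (x i) (s i) (y i) / Bm N PS P i (s i) (y i))))
        - (∑ y, (if jp N PS P s x y = 0 then 0 else jp N PS P s x y *
            Real.logb 2 ((∏ i, N (x i) (s i) (y i)) / gm N P s y)))
        = ∑ y, jp N PS P s x y *
            Real.logb 2 ((∑ x', jp N PS P s x' y) / ∏ i, Bm N PS P i (s i) (y i)) := by
      intro x
      rw [← Finset.sum_sub_distrib]
      refine Finset.sum_congr rfl fun y _ => ?_
      by_cases h : jp N PS P s x y = 0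
      · simp [h]
      · -- positivity facts
        have hjp : 0 < jp N PS P s x y :=
          lt_of_le_of_ne (jp_nonneg N PS P hN hPS hP s x y) (Ne.symm h)
        have hW : (∏ i, PS (s i)) ≠ 0 := by
          intro h0; exact h (by unfold jp; rw [h0, zero_mul, zero_mul])
        have hPsx : P s x ≠ 0 := by
          intro h0; exact h (by unfold jp; rw [h0, mul_zero, zero_mul])
        have hNpr : (∏ i, N (x i) (s i) (y i)) ≠ 0 := by
          intro h0; exact h (by unfold jp; rw [h0, mul_zero])
        have hPSi : ∀ i : Fin n, 0 < PS (s i) := fun i =>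
          lt_of_le_of_ne (hPS.1 _)
            (Ne.symm ((Finset.prod_ne_zero_iff.1 hW) i (Finset.mem_univ i)))
        have hNi : ∀ i : Fin n, 0 < N (x i) (s i) (y i) := fun i =>
          lt_of_le_of_ne (hN.1 _ _ _)
            (Ne.symm ((Finset.prod_ne_zero_iff.1 hNpr) i (Finset.mem_univ i)))
        have hqi : ∀ i : Fin n, 0 < q N PS P i (s i) (x i) (y i) := fun i =>
          lt_of_lt_of_le hjp (jp_le_q N PS P hN hPS hP i s x y)
        have hBi : ∀ i : Fin n, 0 < Bm N PS P i (s i) (y i) := fun i => by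
          rw [← q_sum_x N PS P hN i (s i) (y i)]
          exact lt_of_lt_of_le (hqi i)
            (Finset.single_le_sum
              (fun xi _ => q_nonneg N PS P hN hPS hP i (s i) xi (y i))
              (Finset.mem_univ (x i)))
        have hgm : 0 < gm N P s y := by
          have h1 : P s x * ∏ i, N (x i) (s i) (y i) ≤ gm N P s y :=
            Finset.single_le_sum
              (fun x' _ => mul_nonneg ((hP s).1 x') (Npr_nonneg N hN s x' y))
              (Finset.mem_univ x)
          have h2 : 0 < P s x * ∏ i, N (x i) (s i) (y i) := by
            rcases (mul_ne_zero hPsx hNpr).lt_or_gt with hlt | hgt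
            · exact absurd hlt (not_lt.2 (mul_nonneg ((hP s).1 x) (Npr_nonneg N hN s x y)))
            · exact hgt
          linarith
        have hBpr : 0 < ∏ i, Bm N PS P i (s i) (y i) :=
          Finset.prod_pos fun i _ => hBi i
        -- rewrite ites
        have hsum : ∀ i : Fin n, jp N PS P s x y *
            (if q N PS P i (s i) (x i) (y i) = 0 then 0
              else Real.logb 2 (PS (s i) * N (x i) (s i) (y i) / Bm N PS P i (s i) (y i)))
            = jp N PS P s x y *
              Real.logb 2 (PS (s i) * N (x i) (s i) (y i) / Bm N PS P i (s i) (y i)) :=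
          fun i => by rw [if_neg (ne_of_gt (hqi i))]
        rw [Finset.sum_congr rfl fun i _ => hsum i, if_neg h, ← Finset.mul_sum, ← mul_sub]
        congr 1
        -- log identity
        have hc : ∀ i : Fin n,
            PS (s i) * N (x i) (s i) (y i) / Bm N PS P i (s i) (y i) ≠ 0 := fun i =>
          ne_of_gt (div_pos (mul_pos (hPSi i) (hNi i)) (hBi i))
        rw [← Real.logb_prod Finset.univ _ (fun i _ => hc i),
          ← Real.logb_div (Finset.prod_ne_zero_iff.2 fun i _ => hc i)
            (ne_of_gt (div_pos (lt_of_le_of_ne (Npr_nonneg N hN s x y) (Ne.symm hNpr)) hgm))]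
        congr 1
        rw [Finset.prod_div_distrib, Finset.prod_mul_distrib, jp_sum_x N PS P s y]
        field_simp
    rw [Finset.sum_congr rfl fun x _ => inner x, Finset.sum_comm]
    exact Finset.sum_congr rfl fun y _ => (Finset.sum_mul _ _ _).symm
  rw [key]
  -- Gibbs
  refine gibbs2 _ _ (fun s y => Finset.sum_nonneg fun x _ => jp_nonneg N PS P hN hPS hP s x y)
    (fun s y => Finset.prod_nonneg fun i _ =>
      Bm_nonneg N PS P hPS hP hN i (s i) (y i)) ?_ ?_ ?_
  · intro s y hsy
    obtain ⟨x, _, hx⟩ := Finset.exists_ne_zero_of_sum_ne_zero hsy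
    have hjp : 0 < jp N PS P s x y :=
      lt_of_le_of_ne (jp_nonneg N PS P hN hPS hP s x y) (Ne.symm hx)
    refine Finset.prod_pos fun i _ => ?_
    rw [← q_sum_x N PS P hN i (s i) (y i)]
    refine lt_of_lt_of_le (lt_of_lt_of_le hjp (jp_le_q N PS P hN hPS hP i s x y))
      (Finset.single_le_sum
        (fun xi _ => q_nonneg N PS P hN hPS hP i (s i) xi (y i)) (Finset.mem_univ (x i)))
  · -- total mass of a
    have : ∀ s : Fin n → S, (∑ y, ∑ x, jp N PS P s x y) = ∏ i, PS (s i) := fun s => by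
      rw [Finset.sum_comm]; exact jp_sum_xy N PS P hN hP s
    rw [Finset.sum_congr rfl fun s _ => this s]
    exact W_sum PS hPS
  · -- total mass of b
    have h1 : ∀ s : Fin n → S, (∑ y : Fin n → Y, ∏ i, Bm N PS P i (s i) (y i))
        = ∏ i, ∑ yi, Bm N PS P i (s i) yi := fun s =>
      sum_pi_prod (fun i yi => Bm N PS P i (s i) yi)
    rw [Finset.sum_congr rfl fun s _ => h1 s,
      sum_pi_prod (fun i si => ∑ yi, Bm N PS P i si yi)]
    have h2 : ∀ i : Fin n, (∑ si, ∑ yi, Bm N PS P i si yi) = 1 := fun i =>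
      Bm_all N PS P hN hPS hP i
    rw [Finset.prod_congr rfl fun i _ => h2 i, Finset.prod_const_one]


include hPS hP in
lemma Am_le_PS (i : Fin n) (si : S) (xi : X) : Am PS P i si xi ≤ PS si := by
  rw [← Am_sum PS P hPS hP i si]
  exact Finset.single_le_sum (fun xi' _ => Am_nonneg PS P hPS hP i si xi')
    (Finset.mem_univ xi)

include hN hPS hP in
lemma q_mem (i : Fin n) (hX : Nonempty X) :
    ∃ PXS : S → X → ℝ, (∀ s, IsPMF (PXS s)) ∧
      condMI (q N PS P i) = condMI (fun s x y => PS s * PXS s x * N x s y) := by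
  refine ⟨fun s x => if PS s = 0 then (Fintype.card X : ℝ)⁻¹ else Am PS P i s x / PS s,
    ?_, ?_⟩
  · intro s
    by_cases h : PS s = 0
    · constructor
      · intro a; simp only [if_pos h]; positivity
      · simp only [if_pos h, Finset.sum_const, Finset.card_univ, nsmul_eq_mul]
        rw [mul_inv_cancel₀]
        exact_mod_cast Fintype.card_ne_zero
    · constructor
      · intro a
        simp only [if_neg h]
        exact div_nonneg (Am_nonneg PS P hPS hP i s a) (hPS.1 s)
      · simp only [if_neg h]
        rw [← Finset.sum_div, Am_sum PS P hPS hP i s, div_self h]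
  · have hfun : q N PS P i = fun s x y => PS s *
        (if PS s = 0 then (Fintype.card X : ℝ)⁻¹ else Am PS P i s x / PS s) * N x s y := by
      funext s x y
      rw [q_eq N PS P hN i s x y]
      by_cases h : PS s = 0
      · have hAm0 : Am PS P i s x = 0 :=
          le_antisymm (h ▸ Am_le_PS PS P hPS hP i s x) (Am_nonneg PS P hPS hP i s x)
        rw [hAm0, zero_mul, h, zero_mul, zero_mul]
      · rw [if_neg h]
        field_simp
    rw [hfun]

include hN hPS hP in
lemma part2 : condMI (jp N PS P) ≤ n * sSup {r : ℝ | ∃ PXS : S → X → ℝ,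
    (∀ s, IsPMF (PXS s)) ∧ r = condMI (fun s x y => PS s * PXS s x * N x s y)} := by
  have hbdd : BddAbove {r : ℝ | ∃ PXS : S → X → ℝ,
      (∀ s, IsPMF (PXS s)) ∧ r = condMI (fun s x y => PS s * PXS s x * N x s y)} := by
    refine ⟨(Fintype.card S * Fintype.card X * Fintype.card Y : ℝ) / Real.log 2, ?_⟩
    rintro r ⟨PXS, hPXS, rfl⟩
    apply condMI_le_bound
    · intro s x y
      exact mul_nonneg (mul_nonneg (hPS.1 s) ((hPXS s).1 x)) (hN.1 x s y)
    · have h1 : ∀ (s : S) (x : X), (∑ y, PS s * PXS s x * N x s y) = PS s * PXS s x := by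
        intro s x; rw [← Finset.mul_sum, hN.2 x s, mul_one]
      have h2 : ∀ s : S, (∑ x, PS s * PXS s x) = PS s := by
        intro s; rw [← Finset.mul_sum, (hPXS s).2, mul_one]
      simp only [h1, h2, hPS.2]
  have hmem : ∀ i : Fin n, condMI (q N PS P i) ∈ {r : ℝ | ∃ PXS : S → X → ℝ,
      (∀ s, IsPMF (PXS s)) ∧ r = condMI (fun s x y => PS s * PXS s x * N x s y)} := by
    intro i
    have hS : Nonempty S := by
      by_contra hs
      rw [not_nonempty_iff] at hs
      have h := hPS.2
      rw [Finset.univ_eq_empty, Finset.sum_empty] at h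
      exact one_ne_zero h.symm
    have hX : Nonempty X := by
      by_contra hx
      rw [not_nonempty_iff] at hx
      haveI : IsEmpty (Fin n → X) := ⟨fun f => hx.false (f i)⟩
      have h := (hP (fun _ => Classical.arbitrary S)).2
      rw [Finset.univ_eq_empty, Finset.sum_empty] at h
      exact one_ne_zero h.symm
    obtain ⟨PXS, hPXS, heq⟩ := q_mem N PS P hN hPS hP i hX
    exact ⟨PXS, hPXS, heq⟩
  calc condMI (jp N PS P) ≤ ∑ i, condMI (q N PS P i) := part1 N PS P hN hPS hP
    _ ≤ ∑ _i : Fin n, sSup {r : ℝ | ∃ PXS : S → X → ℝ,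
        (∀ s, IsPMF (PXS s)) ∧ r = condMI (fun s x y => PS s * PXS s x * N x s y)} :=
      Finset.sum_le_sum fun i _ => le_csSup hbdd (hmem i)
    _ = n * sSup {r : ℝ | ∃ PXS : S → X → ℝ,
        (∀ s, IsPMF (PXS s)) ∧ r = condMI (fun s x y => PS s * PXS s x * N x s y)} := by
      rw [Finset.sum_const, Finset.card_univ, Fintype.card_fin, nsmul_eq_mul]



end SL17

/-- single-letterization: for any conditional input pmf `P(x^n|s^n)`
over the `n`-fold memoryless channel with state, `I(X^n;Y^n|S^n) ≤ Σ_i I(X_i;Y_i|S_i)`,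
and hence `I(X^n;Y^n|S^n) ≤ n · sup_{P_{X|S}} I(X;Y|S)`. -/
theorem stmt17 {X S Y : Type*} [Fintype X] [Fintype S] [Fintype Y]
    (N : X → S → Y → ℝ) (hN : IsStateKernel N) (PS : S → ℝ) (hPS : IsPMF PS)
    (n : ℕ) (P : (Fin n → S) → (Fin n → X) → ℝ) (hP : ∀ s, IsPMF (P s)) :
    condMI (fun (s : Fin n → S) (x : Fin n → X) (y : Fin n → Y) =>
        (∏ i, PS (s i)) * P s x * ∏ i, N (x i) (s i) (y i))
      ≤ ∑ i : Fin n, condMI (fun (si : S) (xi : X) (yi : Y) =>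
          ∑ s : Fin n → S, ∑ x : Fin n → X, ∑ y : Fin n → Y,
            if s i = si ∧ x i = xi ∧ y i = yi then
              (∏ j, PS (s j)) * P s x * ∏ j, N (x j) (s j) (y j)
            else 0) ∧
    condMI (fun (s : Fin n → S) (x : Fin n → X) (y : Fin n → Y) =>
        (∏ i, PS (s i)) * P s x * ∏ i, N (x i) (s i) (y i))
      ≤ n * sSup {r : ℝ | ∃ PXS : S → X → ℝ, (∀ s, IsPMF (PXS s)) ∧
          r = condMI (fun s x y => PS s * PXS s x * N x s y)} := by
  constructor
  · exact SL17.part1 N PS P hN hPS hP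
  · exact SL17.part2 N PS P hN hPS hP
end
end

section
/- For every 2-user broadcast channel N on finite alphabets and all M1, M2 ∈ ℕ, the supremum of the joint success probability over coding schemes with bipartite NS assistance between the transmitter and user 1 is unchanged when user 1 is additionally given message W2 as side information: sup over Z ∈ Z^{NS-1}(M1, M2, N) of η(Z) equals sup over Z ∈ Z^{NS-1,SI-1}(M1, M2, N) of η(Z). -/
open scoped BigOperators Classical
open Finset Filter

noncomputable section

/-- A stochastic kernel. -/
def IsKernel {A B : Type*} [Fintype B] (D : A → B → ℝ) : Prop :=
  (∀ a b, 0 ≤ D a b) ∧ ∀ a, ∑ b, D a b = 1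

/-- A 2-user broadcast channel kernel `N(y1,y2|x)`. -/
def IsBCKernel {X Y1 Y2 : Type*} [Fintype Y1] [Fintype Y2] (N : X → Y1 → Y2 → ℝ) : Prop :=
  (∀ x y1 y2, 0 ≤ N x y1 y2) ∧ ∀ x, ∑ y1, ∑ y2, N x y1 y2 = 1

/-- Joint success probability of an NS-1 scheme `Z1 × D2`. -/
def etaNS1 {X Y1 Y2 : Type*} [Fintype X] [Fintype Y1] [Fintype Y2] (M1 M2 : ℕ)
    (N : X → Y1 → Y2 → ℝ)
    (Z1 : (Fin M1 × Fin M2) → Y1 → X → Fin M1 → ℝ)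
    (D2 : Y2 → Fin M2 → ℝ) : ℝ :=
  ((M1 : ℝ) * (M2 : ℝ))⁻¹ * ∑ w1, ∑ w2, ∑ x, ∑ y1, ∑ y2,
    N x y1 y2 * Z1 (w1, w2) y1 x w1 * D2 y2 w2

/-- Joint success probability of an NS-1,SI-1 scheme `Z1 × D2`
(user 1 additionally receives `W2` as side information). -/
def etaNS1SI {X Y1 Y2 : Type*} [Fintype X] [Fintype Y1] [Fintype Y2] (M1 M2 : ℕ)
    (N : X → Y1 → Y2 → ℝ)
    (Z1 : (Fin M1 × Fin M2) → (Y1 × Fin M2) → X → Fin M1 → ℝ)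
    (D2 : Y2 → Fin M2 → ℝ) : ℝ :=
  ((M1 : ℝ) * (M2 : ℝ))⁻¹ * ∑ w1, ∑ w2, ∑ x, ∑ y1, ∑ y2,
    N x y1 y2 * Z1 (w1, w2) (y1, w2) x w1 * D2 y2 w2

/-- Auxiliary: rotate the last summation variable to the front. -/
lemma sum_rot3 {α β γ : Type*} [Fintype α] [Fintype β] [Fintype γ] (F : α → β → γ → ℝ) :
    ∑ a, ∑ b, ∑ c, F a b c = ∑ c, ∑ a, ∑ b, F a b c := by
  rw [show (∑ a, ∑ b, ∑ c, F a b c) = ∑ a, ∑ c, ∑ b, F a b c from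
    Finset.sum_congr rfl fun a _ => Finset.sum_comm]
  exact Finset.sum_comm

/-- Auxiliary: pull the first summation variable past the other four. -/
lemma sum_comm5 {α β γ δ ε : Type*} [Fintype α] [Fintype β] [Fintype γ] [Fintype δ]
    [Fintype ε] (F : α → β → γ → δ → ε → ℝ) :
    ∑ a, ∑ b, ∑ c, ∑ d, ∑ e, F a b c d e = ∑ b, ∑ c, ∑ d, ∑ e, ∑ a, F a b c d e := by
  rw [Finset.sum_comm]
  refine Finset.sum_congr rfl fun b _ => ?_
  rw [Finset.sum_comm]
  refine Finset.sum_congr rfl fun c _ => ?_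
  rw [Finset.sum_comm]
  exact Finset.sum_congr rfl fun d _ => Finset.sum_comm

/-- over any 2-user broadcast channel, the optimal joint success
probability of NS-1 schemes (bipartite NS assistance between the transmitter and
user 1) is unchanged when user 1 is additionally given `W2` as side information. -/
theorem stmt18 {X Y1 Y2 : Type*} [Fintype X] [Fintype Y1] [Fintype Y2]
    (N : X → Y1 → Y2 → ℝ) (hN : IsBCKernel N) (M1 M2 : ℕ) :
    sSup {e : ℝ | ∃ (Z1 : (Fin M1 × Fin M2) → Y1 → X → Fin M1 → ℝ)
        (D2 : Y2 → Fin M2 → ℝ), IsNSBox Z1 ∧ IsKernel D2 ∧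
        e = etaNS1 M1 M2 N Z1 D2} =
    sSup {e : ℝ | ∃ (Z1 : (Fin M1 × Fin M2) → (Y1 × Fin M2) → X → Fin M1 → ℝ)
        (D2 : Y2 → Fin M2 → ℝ), IsNSBox Z1 ∧ IsKernel D2 ∧
        e = etaNS1SI M1 M2 N Z1 D2} := by
  have hsets : {e : ℝ | ∃ (Z1 : (Fin M1 × Fin M2) → Y1 → X → Fin M1 → ℝ)
        (D2 : Y2 → Fin M2 → ℝ), IsNSBox Z1 ∧ IsKernel D2 ∧
        e = etaNS1 M1 M2 N Z1 D2} =
      {e : ℝ | ∃ (Z1 : (Fin M1 × Fin M2) → (Y1 × Fin M2) → X → Fin M1 → ℝ)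
        (D2 : Y2 → Fin M2 → ℝ), IsNSBox Z1 ∧ IsKernel D2 ∧
        e = etaNS1SI M1 M2 N Z1 D2} := by
    apply Set.Subset.antisymm
    · -- trivial direction: ignore the side information
      rintro e ⟨Z1, D2, ⟨h0, h1, h2, h3⟩, hD, rfl⟩
      refine ⟨fun w p x b => Z1 w p.1 x b, D2, ⟨?_, ?_, ?_, ?_⟩, hD, ?_⟩
      · intro a1 a2 b1 b2; exact h0 a1 a2.1 b1 b2
      · intro a1 a2; exact h1 a1 a2.1
      · intro a1 a2 a2' b1; exact h2 a1 a2.1 a2'.1 b1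
      · intro a1 a1' a2 b2; exact h3 a1 a1' a2.1 b2
      · rfl
    · -- interesting direction: remove the side information by a shift trick
      rintro e ⟨Z1, D2, ⟨h0, h1, h2, h3⟩, hD, rfl⟩
      rcases Nat.eq_zero_or_pos M1 with hM1 | hM1
      · subst hM1
        refine ⟨fun _ _ _ _ => 0, D2, ⟨?_, ?_, ?_, ?_⟩, hD, ?_⟩
        · intro _ _ _ _; exact le_refl 0
        · intro a1 _; exact a1.1.elim0
        · intro a1 _ _ _; exact a1.1.elim0
        · intro a1 _ _ _; exact a1.1.elim0
        · simp [etaNS1, etaNS1SI]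
      haveI : NeZero M1 := ⟨hM1.ne'⟩
      have hM1R : (M1 : ℝ) ≠ 0 := Nat.cast_ne_zero.mpr hM1.ne'
      -- reindexing lemmas for sums over Fin M1
      have reidxR : ∀ (F : Fin M1 → ℝ) (s : Fin M1), ∑ b, F (b + s) = ∑ b, F b :=
        fun F s => Fintype.sum_equiv (Equiv.addRight s) _ _ (fun _ => rfl)
      have reidxL : ∀ (F : Fin M1 → ℝ) (b : Fin M1), ∑ s, F (b + s) = ∑ s, F s :=
        fun F b => Fintype.sum_equiv (Equiv.addLeft b) _ _ (fun _ => rfl)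
      refine ⟨fun w y1 x b => (M1 : ℝ)⁻¹ * ∑ s, Z1 (w.1 + s, w.2) (y1, w.2) x (b + s),
        D2, ⟨?_, ?_, ?_, ?_⟩, hD, ?_⟩
      · intro a1 a2 b1 b2
        exact mul_nonneg (inv_nonneg.mpr (Nat.cast_nonneg M1))
          (Finset.sum_nonneg fun s _ => h0 _ _ _ _)
      · intro a1 y1
        have : ∑ x, ∑ b, ((M1 : ℝ)⁻¹ * ∑ s, Z1 (a1.1 + s, a1.2) (y1, a1.2) x (b + s))
            = (M1 : ℝ)⁻¹ * ∑ s, ∑ x, ∑ b, Z1 (a1.1 + s, a1.2) (y1, a1.2) x (b + s) := by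
          simp only [← Finset.mul_sum]
          congr 1
          exact sum_rot3 (fun x b s => Z1 (a1.1 + s, a1.2) (y1, a1.2) x (b + s))
        rw [this]
        have : ∀ s : Fin M1, ∑ x, ∑ b, Z1 (a1.1 + s, a1.2) (y1, a1.2) x (b + s) = 1 := by
          intro s
          rw [Finset.sum_congr rfl fun x _ => reidxR (fun b => Z1 (a1.1 + s, a1.2) (y1, a1.2) x b) s]
          exact h1 _ _
        rw [Finset.sum_congr rfl fun s _ => this s]
        simp [hM1R]
      · intro a1 y1 y1' x
        simp only [← Finset.mul_sum]
        congr 1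
        rw [Finset.sum_comm, Finset.sum_comm (f := fun b s => Z1 (a1.1 + s, a1.2) (y1', a1.2) x (b + s))]
        refine Finset.sum_congr rfl fun s _ => ?_
        rw [reidxR (fun b => Z1 (a1.1 + s, a1.2) (y1, a1.2) x b) s,
          reidxR (fun b => Z1 (a1.1 + s, a1.2) (y1', a1.2) x b) s]
        exact h2 _ _ _ _
      · intro a1 a1' y1 b
        have key : ∀ (c : Fin M1 × Fin M2),
            ∑ x, ((M1 : ℝ)⁻¹ * ∑ s, Z1 (c.1 + s, c.2) (y1, c.2) x (b + s)) = (M1 : ℝ)⁻¹ := by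
          intro c
          rw [← Finset.mul_sum]
          have : ∑ x, ∑ s, Z1 (c.1 + s, c.2) (y1, c.2) x (b + s)
              = ∑ s, ∑ x, Z1 (c.1 + s, c.2) (y1, c.2) x (b + s) := Finset.sum_comm
          rw [this]
          have h4 : ∀ s : Fin M1, ∑ x, Z1 (c.1 + s, c.2) (y1, c.2) x (b + s)
              = ∑ x, Z1 c (y1, c.2) x (b + s) := fun s => h3 _ _ _ _
          rw [Finset.sum_congr rfl fun s _ => h4 s]
          rw [reidxL (fun u => ∑ x, Z1 c (y1, c.2) x u) b]
          rw [Finset.sum_comm, h1 c (y1, c.2), mul_one]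
        rw [key a1, key a1']
      · -- equality of success probabilities
        unfold etaNS1 etaNS1SI
        congr 1
        rw [sum_comm5, sum_comm5 (F := fun w1 w2 x y1 y2 =>
          N x y1 y2 * ((fun (w : Fin M1 × Fin M2) (y1 : Y1) (x : X) (b : Fin M1) =>
            (M1 : ℝ)⁻¹ * ∑ s, Z1 (w.1 + s, w.2) (y1, w.2) x (b + s)) (w1, w2) y1 x w1) * D2 y2 w2)]
        refine Finset.sum_congr rfl fun w2 _ => Finset.sum_congr rfl fun x _ =>
          Finset.sum_congr rfl fun y1 _ => Finset.sum_congr rfl fun y2 _ => ?_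
        simp only [← Finset.sum_mul, ← Finset.mul_sum]
        congr 1
        -- ∑ w1, Z1 (w1,w2) (y1,w2) x w1 = (M1)⁻¹ * ∑ w1, ∑ s, Z1 (w1+s,w2) (y1,w2) x (w1+s)
        have : ∑ w1, ∑ s, Z1 (w1 + s, w2) (y1, w2) x (w1 + s)
            = ∑ s, ∑ w1, Z1 (w1 + s, w2) (y1, w2) x (w1 + s) := Finset.sum_comm
        rw [this]
        have h5 : ∀ s : Fin M1, ∑ w1, Z1 (w1 + s, w2) (y1, w2) x (w1 + s)
            = ∑ u, Z1 (u, w2) (y1, w2) x u :=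
          fun s => reidxR (fun u => Z1 (u, w2) (y1, w2) x u) s
        rw [Finset.sum_congr rfl fun s _ => h5 s, Finset.sum_const, Finset.card_univ,
          Fintype.card_fin, nsmul_eq_mul]
        rw [← mul_assoc ((M1 : ℝ)⁻¹), inv_mul_cancel₀ hM1R, one_mul]
  rw [hsets]
end
end
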